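/- arXiv:2101.08491 — 2 statements merged into one kernel-verified Lean document; each statement's English description precedes it below -/
import Mathlib

section
/- If (M,c,h) → (M',c',h') in the extended operational semantics, where M is a GOSC term and h is a GOSC heap (storing only ground-type values), then ν(M) ∪ {c} ⊇ ν(M') ∪ {c'}; that is, GOSC internal reductions never introduce new function or continuation names. -/
set_option maxHeartbeats 1000000
set_option autoImplicit true

namespace OGS

/-! ## Types -/

inductive Ty : Type
  | unit | int | bool
  | ref : Ty → Ty
  | prod : Ty → Ty → Ty
  | arrow : Ty → Ty → Ty
  | cont : Ty → Ty
  deriving DecidableEq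

/-- Ground types ι ::= Unit | Int | Bool | ref ι -/
inductive Ty.Ground : Ty → Prop
  | unit : Ty.Ground .unit
  | int : Ty.Ground .int
  | bool : Ty.Ground .bool
  | ref {ι : Ty} : Ty.Ground ι → Ty.Ground (.ref ι)

/-- GOSC types: reference types restricted to ground contents. -/
def Ty.isGOSC : Ty → Prop
  | .unit => True
  | .int => True
  | .bool => True
  | .ref ι => Ty.Ground ι
  | .prod a b => a.isGOSC ∧ b.isGOSC
  | .arrow a b => a.isGOSC ∧ b.isGOSC
  | .cont a => a.isGOSC

/-- HOS types: no cont constructor. -/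
def Ty.isHOS : Ty → Prop
  | .unit => True
  | .int => True
  | .bool => True
  | .ref a => a.isHOS
  | .prod a b => a.isHOS ∧ b.isHOS
  | .arrow a b => a.isHOS ∧ b.isHOS
  | .cont _ => False

/-- cont- and ref-free types -/
def Ty.crFree : Ty → Prop
  | .unit => True
  | .int => True
  | .bool => True
  | .ref _ => False
  | .prod a b => a.crFree ∧ b.crFree
  | .arrow a b => a.crFree ∧ b.crFree
  | .cont _ => False

inductive Frag | HOSC | GOSC | HOS | GOS
  deriving DecidableEq

def Frag.tyOK : Frag → Ty → Prop
  | .HOSC, _ => True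
  | .GOSC, τ => τ.isGOSC
  | .HOS, τ => τ.isHOS
  | .GOS, τ => τ.isGOSC ∧ τ.isHOS

/-- fragments featuring control (callcc/throw/cont) -/
def Frag.hasCont : Frag → Prop
  | .HOSC => True
  | .GOSC => True
  | .HOS => False
  | .GOS => False

/-! ## Names -/

structure FName where
  id : ℕ
  dom : Ty
  cod : Ty
  deriving DecidableEq

structure CName where
  id : ℕ
  ty : Ty
  deriving DecidableEq

inductive Name
  | fn : FName → Name
  | cn : CName → Name
  deriving DecidableEq

/-- the designated error function name errn : Unit → Unit -/
def errn : FName := ⟨0, .unit, .unit⟩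

/-- the designated terminal continuation names tern_σ -/
def tern (σ : Ty) : CName := ⟨0, σ⟩

/-- ◦ = { tern_σ | σ } -/
def circNames : Set Name := {n | ∃ σ : Ty, n = Name.cn (tern σ)}

/-! ## Terms -/

inductive ArithOp | add | sub | mul
inductive CmpOp | eq | lt

inductive Tm : Type
  | unit | tt | ff
  | int : ℤ → Tm
  | bvar : ℕ → Tm
  | errv : Tm                      -- the designated error variable err : Unit → Unit
  | loc : ℕ → Tm
  | fname : FName → Tm             -- extended syntax: function names as constants
  | hole : Tm                      -- the hole • of contexts / evaluation contexts
  | pair : Tm → Tm → Tm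
  | fst : Tm → Tm
  | snd : Tm → Tm
  | lam : Ty → Tm → Tm             -- de Bruijn
  | fix : Ty → Ty → Tm → Tm        -- fix y (x:σ).M : σ→τ, bvar 0 = x, bvar 1 = y
  | app : Tm → Tm → Tm
  | newref : Ty → Tm → Tm
  | deref : Tm → Tm
  | assign : Tm → Tm → Tm
  | ifte : Tm → Tm → Tm → Tm
  | arith : ArithOp → Tm → Tm → Tm
  | cmp : CmpOp → Tm → Tm → Tm
  | refeq : Tm → Tm → Tm
  | callcc : Ty → Tm → Tm          -- callcc_τ(x.M), binds x
  | throw : Ty → Tm → Tm → Tm      -- throw_τ M to N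
  | contV : Ty → Ty → Tm → Tm      -- cont_τ(K), K : τ ⇒ σ
  | contE : Ty → Tm → CName → Tm   -- extended: cont_τ(K, c)

inductive IsVal : Tm → Prop
  | unit : IsVal .unit
  | tt : IsVal .tt
  | ff : IsVal .ff
  | int (n : ℤ) : IsVal (.int n)
  | bvar (i : ℕ) : IsVal (.bvar i)
  | errv : IsVal .errv
  | loc (ℓ : ℕ) : IsVal (.loc ℓ)
  | fname (f : FName) : IsVal (.fname f)
  | pair {u v : Tm} : IsVal u → IsVal v → IsVal (.pair u v)
  | lam (τ : Ty) (M : Tm) : IsVal (.lam τ M)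
  | fix (σ τ : Ty) (M : Tm) : IsVal (.fix σ τ M)
  | contV (τ σ : Ty) (K : Tm) : IsVal (.contV τ σ K)
  | contE (τ : Ty) (K : Tm) (c : CName) : IsVal (.contE τ K c)

/-- substitution of a (closed) term `V` for de Bruijn index `k` -/
def Tm.subst : Tm → ℕ → Tm → Tm
  | .bvar i, k, V => if i = k then V else if k < i then .bvar (i - 1) else .bvar i
  | .pair a b, k, V => .pair (a.subst k V) (b.subst k V)
  | .fst a, k, V => .fst (a.subst k V)
  | .snd a, k, V => .snd (a.subst k V)
  | .lam τ a, k, V => .lam τ (a.subst (k+1) V)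
  | .fix σ τ a, k, V => .fix σ τ (a.subst (k+2) V)
  | .app a b, k, V => .app (a.subst k V) (b.subst k V)
  | .newref τ a, k, V => .newref τ (a.subst k V)
  | .deref a, k, V => .deref (a.subst k V)
  | .assign a b, k, V => .assign (a.subst k V) (b.subst k V)
  | .ifte a b c, k, V => .ifte (a.subst k V) (b.subst k V) (c.subst k V)
  | .arith op a b, k, V => .arith op (a.subst k V) (b.subst k V)
  | .cmp op a b, k, V => .cmp op (a.subst k V) (b.subst k V)
  | .refeq a b, k, V => .refeq (a.subst k V) (b.subst k V)
  | .callcc τ a, k, V => .callcc τ (a.subst (k+1) V)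
  | .throw τ a b, k, V => .throw τ (a.subst k V) (b.subst k V)
  | .contV τ σ K, k, V => .contV τ σ (K.subst k V)
  | .contE τ K c, k, V => .contE τ (K.subst k V) c
  | t, _, _ => t

/-- simultaneous substitution of a list of closed values for the free variables 0,1,2,… -/
def Tm.msubst (M : Tm) (γ : List Tm) : Tm := γ.foldl (fun N V => N.subst 0 V) M

/-- filling the hole of a context/evaluation context (capturing; does not descend
into the evaluation-context argument of continuation constants, whose hole is their own) -/
def Tm.fill : Tm → Tm → Tm
  | .hole, M => M
  | .pair a b, M => .pair (a.fill M) (b.fill M)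
  | .fst a, M => .fst (a.fill M)
  | .snd a, M => .snd (a.fill M)
  | .lam τ a, M => .lam τ (a.fill M)
  | .fix σ τ a, M => .fix σ τ (a.fill M)
  | .app a b, M => .app (a.fill M) (b.fill M)
  | .newref τ a, M => .newref τ (a.fill M)
  | .deref a, M => .deref (a.fill M)
  | .assign a b, M => .assign (a.fill M) (b.fill M)
  | .ifte a b c, M => .ifte (a.fill M) (b.fill M) (c.fill M)
  | .arith op a b, M => .arith op (a.fill M) (b.fill M)
  | .cmp op a b, M => .cmp op (a.fill M) (b.fill M)
  | .refeq a b, M => .refeq (a.fill M) (b.fill M)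
  | .callcc τ a, M => .callcc τ (a.fill M)
  | .throw τ a b, M => .throw τ (a.fill M) (b.fill M)
  | t, _ => t

/-- list of all subterm occurrences -/
def Tm.subterms : Tm → List Tm
  | .pair a b => .pair a b :: (a.subterms ++ b.subterms)
  | .fst a => .fst a :: a.subterms
  | .snd a => .snd a :: a.subterms
  | .lam τ a => .lam τ a :: a.subterms
  | .fix σ τ a => .fix σ τ a :: a.subterms
  | .app a b => .app a b :: (a.subterms ++ b.subterms)
  | .newref τ a => .newref τ a :: a.subterms
  | .deref a => .deref a :: a.subterms
  | .assign a b => .assign a b :: (a.subterms ++ b.subterms)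
  | .ifte a b c => .ifte a b c :: (a.subterms ++ b.subterms ++ c.subterms)
  | .arith op a b => .arith op a b :: (a.subterms ++ b.subterms)
  | .cmp op a b => .cmp op a b :: (a.subterms ++ b.subterms)
  | .refeq a b => .refeq a b :: (a.subterms ++ b.subterms)
  | .callcc τ a => .callcc τ a :: a.subterms
  | .throw τ a b => .throw τ a b :: (a.subterms ++ b.subterms)
  | .contV τ σ K => .contV τ σ K :: K.subterms
  | .contE τ K c => .contE τ K c :: K.subterms
  | t => [t]

/-- number of occurrences of the (ambient) hole, not counting holes belonging
to continuation constants -/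
def Tm.holeCount : Tm → ℕ
  | .hole => 1
  | .pair a b => a.holeCount + b.holeCount
  | .fst a => a.holeCount
  | .snd a => a.holeCount
  | .lam _ a => a.holeCount
  | .fix _ _ a => a.holeCount
  | .app a b => a.holeCount + b.holeCount
  | .newref _ a => a.holeCount
  | .deref a => a.holeCount
  | .assign a b => a.holeCount + b.holeCount
  | .ifte a b c => a.holeCount + b.holeCount + c.holeCount
  | .arith _ a b => a.holeCount + b.holeCount
  | .cmp _ a b => a.holeCount + b.holeCount
  | .refeq a b => a.holeCount + b.holeCount
  | .callcc _ a => a.holeCount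
  | .throw _ a b => a.holeCount + b.holeCount
  | _ => 0

/-- ν(M): the set of (function and continuation) names occurring in a term -/
def Tm.names (M : Tm) : Set Name :=
  {n | (∃ f, n = Name.fn f ∧ Tm.fname f ∈ M.subterms) ∨
       (∃ c, n = Name.cn c ∧ ∃ τ K, Tm.contE τ K c ∈ M.subterms)}

/-- surface (non-extended) syntax: no function-name constants, no cont_τ(K,c) -/
def Tm.extFree (M : Tm) : Prop :=
  (∀ f, Tm.fname f ∉ M.subterms) ∧ (∀ τ K c, Tm.contE τ K c ∉ M.subterms)

/-- no occurrence of a continuation constant cont_τ(K) -/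
def Tm.contVFree (M : Tm) : Prop := ∀ τ σ K, Tm.contV τ σ K ∉ M.subterms

def Tm.locFree (M : Tm) : Prop := ∀ ℓ, Tm.loc ℓ ∉ M.subterms

/-- syntactic conditions of cr-freeness: no continuation constants and no locations -/
def Tm.crFreeSyn (M : Tm) : Prop :=
  (∀ τ σ K, Tm.contV τ σ K ∉ M.subterms) ∧
  (∀ τ K c, Tm.contE τ K c ∉ M.subterms) ∧
  (∀ ℓ, Tm.loc ℓ ∉ M.subterms)

/-- head-constructor check for membership in a fragment's (surface) syntax -/
def Tm.headOK (x : Frag) : Tm → Prop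
  | .lam τ _ => x.tyOK τ
  | .fix σ τ _ => x.tyOK (Ty.arrow σ τ)
  | .newref τ _ => x.tyOK (Ty.ref τ)
  | .callcc τ _ => x.hasCont ∧ x.tyOK (Ty.cont τ)
  | .throw τ _ _ => x.hasCont ∧ x.tyOK τ
  | .contV τ σ _ => x.hasCont ∧ x.tyOK (Ty.cont τ) ∧ x.tyOK σ
  | .contE _ _ _ => False
  | .fname _ => False
  | _ => True

/-- `M` is built from the (surface) syntax of fragment `x` -/
def Tm.inFrag (x : Frag) (M : Tm) : Prop := ∀ N ∈ M.subterms, N.headOK x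

/-- head-constructor check for the name-extended syntax of a fragment -/
def Tm.headOKX (x : Frag) : Tm → Prop
  | .lam τ _ => x.tyOK τ
  | .fix σ τ _ => x.tyOK (Ty.arrow σ τ)
  | .newref τ _ => x.tyOK (Ty.ref τ)
  | .callcc τ _ => x.hasCont ∧ x.tyOK (Ty.cont τ)
  | .throw τ _ _ => x.hasCont ∧ x.tyOK τ
  | .contV τ σ _ => x.hasCont ∧ x.tyOK (Ty.cont τ) ∧ x.tyOK σ
  | .contE τ _ c => x.hasCont ∧ x.tyOK (Ty.cont τ) ∧ x.tyOK c.ty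
  | .fname f => x.tyOK (Ty.arrow f.dom f.cod)
  | _ => True

/-- `M` is built from the name-extended syntax of fragment `x` -/
def Tm.inFragX (x : Frag) (M : Tm) : Prop := ∀ N ∈ M.subterms, N.headOKX x

/-! ## Evaluation contexts -/

inductive IsECtx : Tm → Prop
  | hole : IsECtx .hole
  | pairV {v K : Tm} : IsVal v → IsECtx K → IsECtx (.pair v K)
  | pairK {K M : Tm} : IsECtx K → IsECtx (.pair K M)
  | fst {K : Tm} : IsECtx K → IsECtx (.fst K)
  | snd {K : Tm} : IsECtx K → IsECtx (.snd K)
  | appV {v K : Tm} : IsVal v → IsECtx K → IsECtx (.app v K)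
  | appK {K M : Tm} : IsECtx K → IsECtx (.app K M)
  | newref {τ : Ty} {K : Tm} : IsECtx K → IsECtx (.newref τ K)
  | deref {K : Tm} : IsECtx K → IsECtx (.deref K)
  | assignV {v K : Tm} : IsVal v → IsECtx K → IsECtx (.assign v K)
  | assignK {K M : Tm} : IsECtx K → IsECtx (.assign K M)
  | ifte {K M N : Tm} : IsECtx K → IsECtx (.ifte K M N)
  | arithK {op} {K M : Tm} : IsECtx K → IsECtx (.arith op K M)
  | arithV {op} {v K : Tm} : IsVal v → IsECtx K → IsECtx (.arith op v K)
  | cmpK {op} {K M : Tm} : IsECtx K → IsECtx (.cmp op K M)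
  | cmpV {op} {v K : Tm} : IsVal v → IsECtx K → IsECtx (.cmp op v K)
  | refeqK {K M : Tm} : IsECtx K → IsECtx (.refeq K M)
  | refeqV {v K : Tm} : IsVal v → IsECtx K → IsECtx (.refeq v K)
  | throwV {τ : Ty} {v K : Tm} : IsVal v → IsECtx K → IsECtx (.throw τ v K)
  | throwK {τ : Ty} {K M : Tm} : IsECtx K → IsECtx (.throw τ K M)

/-! ## Typing -/

abbrev LocTy := ℕ → Option Ty
abbrev TyCtx := List Ty

def emptyLocTy : LocTy := fun _ => none

/-- Typing judgment `Typed Σ Δ hσ M τ`: locations typed by `Σ`, de Bruijn context `Δ`,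
`hσ` is the type of the hole (if a hole is permitted). -/
inductive Typed : LocTy → TyCtx → Option Ty → Tm → Ty → Prop
  | unit : Typed St Δ hσ .unit .unit
  | tt : Typed St Δ hσ .tt .bool
  | ff : Typed St Δ hσ .ff .bool
  | int (n : ℤ) : Typed St Δ hσ (.int n) .int
  | bvar {i τ} : Δ[i]? = some τ → Typed St Δ hσ (.bvar i) τ
  | errv : Typed St Δ hσ .errv (.arrow .unit .unit)
  | loc {ℓ τ} : St ℓ = some τ → Typed St Δ hσ (.loc ℓ) (.ref τ)
  | fname (f : FName) : Typed St Δ hσ (.fname f) (.arrow f.dom f.cod)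
  | hole : Typed St Δ (some τ) .hole τ
  | pair : Typed St Δ hσ a σ → Typed St Δ hσ b τ → Typed St Δ hσ (.pair a b) (.prod σ τ)
  | fst : Typed St Δ hσ a (.prod σ τ) → Typed St Δ hσ (.fst a) σ
  | snd : Typed St Δ hσ a (.prod σ τ) → Typed St Δ hσ (.snd a) τ
  | lam : Typed St (σ :: Δ) hσ M τ → Typed St Δ hσ (.lam σ M) (.arrow σ τ)
  | fix : Typed St (σ :: Ty.arrow σ τ :: Δ) hσ M τ → Typed St Δ hσ (.fix σ τ M) (.arrow σ τ)
  | app : Typed St Δ hσ a (.arrow σ τ) → Typed St Δ hσ b σ → Typed St Δ hσ (.app a b) τ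
  | newref : Typed St Δ hσ a τ → Typed St Δ hσ (.newref τ a) (.ref τ)
  | deref : Typed St Δ hσ a (.ref τ) → Typed St Δ hσ (.deref a) τ
  | assign : Typed St Δ hσ a (.ref τ) → Typed St Δ hσ b τ → Typed St Δ hσ (.assign a b) .unit
  | ifte : Typed St Δ hσ a .bool → Typed St Δ hσ b τ → Typed St Δ hσ c τ →
      Typed St Δ hσ (.ifte a b c) τ
  | arith : Typed St Δ hσ a .int → Typed St Δ hσ b .int → Typed St Δ hσ (.arith op a b) .int
  | cmp : Typed St Δ hσ a .int → Typed St Δ hσ b .int → Typed St Δ hσ (.cmp op a b) .bool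
  | refeq : Typed St Δ hσ a (.ref τ) → Typed St Δ hσ b (.ref τ) →
      Typed St Δ hσ (.refeq a b) .bool
  | callcc : Typed St (Ty.cont τ :: Δ) hσ M τ → Typed St Δ hσ (.callcc τ M) τ
  | throw : Typed St Δ hσ a σ → Typed St Δ hσ b (.cont σ) → Typed St Δ hσ (.throw τ a b) τ
  | contV : IsECtx K → Typed St Δ (some τ) K σ → Typed St Δ hσ (.contV τ σ K) (.cont τ)
  | contE {c : CName} : IsECtx K → Typed St Δ (some τ) K c.ty →
      Typed St Δ hσ (.contE τ K c) (.cont τ)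

/-! ## Heaps and operational semantics -/

abbrev Heap := ℕ → Option Tm

def Heap.empty : Heap := fun _ => none
def Heap.upd (h : Heap) (ℓ : ℕ) (V : Tm) : Heap := fun ℓ' => if ℓ' = ℓ then some V else h ℓ'

def HeapTyped (St : LocTy) (h : Heap) : Prop :=
  ∀ ℓ τ, St ℓ = some τ → ∃ V, h ℓ = some V ∧ IsVal V ∧ Typed St [] none V τ

def Heap.inFrag (x : Frag) (h : Heap) : Prop := ∀ ℓ V, h ℓ = some V → Tm.inFrag x V
def Heap.inFragX (x : Frag) (h : Heap) : Prop := ∀ ℓ V, h ℓ = some V → Tm.inFragX x V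

def ArithOp.eval : ArithOp → ℤ → ℤ → ℤ
  | .add, m, n => m + n
  | .sub, m, n => m - n
  | .mul, m, n => m * n

def CmpOp.eval : CmpOp → ℤ → ℤ → Bool
  | .eq, m, n => decide (m = n)
  | .lt, m, n => decide (m < n)

def Tm.ofBool (b : Bool) : Tm := if b then .tt else .ff

/-- head reduction rules (the rules of Figure 2 not involving continuations) -/
inductive RedBase : Tm → Heap → Tm → Heap → Prop
  | beta {σ : Ty} {M V : Tm} {h : Heap} : IsVal V →
      RedBase (.app (.lam σ M) V) h (M.subst 0 V) h
  | fixbeta {σ τ : Ty} {M V : Tm} {h : Heap} : IsVal V →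
      RedBase (.app (.fix σ τ M) V) h ((M.subst 0 V).subst 0 (.fix σ τ M)) h
  | fst {v₁ v₂ : Tm} {h : Heap} : IsVal v₁ → IsVal v₂ → RedBase (.fst (.pair v₁ v₂)) h v₁ h
  | snd {v₁ v₂ : Tm} {h : Heap} : IsVal v₁ → IsVal v₂ → RedBase (.snd (.pair v₁ v₂)) h v₂ h
  | iftt {M N : Tm} {h : Heap} : RedBase (.ifte .tt M N) h M h
  | ifff {M N : Tm} {h : Heap} : RedBase (.ifte .ff M N) h N h
  | arith {op} {m n : ℤ} {h : Heap} :
      RedBase (.arith op (.int m) (.int n)) h (.int (op.eval m n)) h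
  | cmp {op} {m n : ℤ} {h : Heap} :
      RedBase (.cmp op (.int m) (.int n)) h (Tm.ofBool (op.eval m n)) h
  | refeq {ℓ ℓ' : ℕ} {h : Heap} :
      RedBase (.refeq (.loc ℓ) (.loc ℓ')) h (Tm.ofBool (decide (ℓ = ℓ'))) h
  | deref {ℓ : ℕ} {V : Tm} {h : Heap} : h ℓ = some V → RedBase (.deref (.loc ℓ)) h V h
  | newref {τ : Ty} {V : Tm} {ℓ : ℕ} {h : Heap} : IsVal V → h ℓ = none →
      RedBase (.newref τ V) h (.loc ℓ) (Heap.upd h ℓ V)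
  | assign {ℓ : ℕ} {V : Tm} {h : Heap} : IsVal V → h ℓ ≠ none →
      RedBase (.assign (.loc ℓ) V) h .unit (Heap.upd h ℓ V)

/-- the operational reduction (M,h) → (M',h') of HOSC (Figure 2) -/
inductive Red : Tm → Heap → Tm → Heap → Prop
  | base {K M M' : Tm} {h h' : Heap} : IsECtx K → RedBase M h M' h' →
      Red (K.fill M) h (K.fill M') h'
  | callcc {τ σ : Ty} {K M : Tm} {h : Heap} : IsECtx K →
      Red (K.fill (.callcc τ M)) h (K.fill (M.subst 0 (.contV τ σ K))) h
  | throw {τ σ σ' : Ty} {K K' V : Tm} {h : Heap} : IsECtx K → IsECtx K' → IsVal V →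
      Red (K.fill (.throw τ V (.contV σ σ' K'))) h (K'.fill V) h

def RedStar : Tm × Heap → Tm × Heap → Prop :=
  Relation.ReflTransGen (fun p q => Red p.1 p.2 q.1 q.2)

/-- (M,h) ⇓_ter -/
def TerObs (M : Tm) (h : Heap) : Prop := ∃ V h', RedStar (M, h) (V, h') ∧ IsVal V

/-- (M,h) ⇓_err : reaching K[err()] -/
def ErrObs (M : Tm) (h : Heap) : Prop :=
  ∃ K h', IsECtx K ∧ RedStar (M, h) (K.fill (.app .errv .unit), h')

/-- the extended operational semantics (M,c,h) → (M',c',h') with continuation names -/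
inductive ERed : Tm → CName → Heap → Tm → CName → Heap → Prop
  | base {K M M' : Tm} {c : CName} {h h' : Heap} : IsECtx K → RedBase M h M' h' →
      ERed (K.fill M) c h (K.fill M') c h'
  | callcc {τ : Ty} {K M : Tm} {c : CName} {h : Heap} : IsECtx K →
      ERed (K.fill (.callcc τ M)) c h (K.fill (M.subst 0 (.contE τ K c))) c h
  | throw {τ σ : Ty} {K K' V : Tm} {c c' : CName} {h : Heap} :
      IsECtx K → IsECtx K' → IsVal V →
      ERed (K.fill (.throw τ V (.contE σ K' c'))) c h (K'.fill V) c' h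

/-! ## Contextual and CIU approximation -/

inductive TKind | ter | err

def TKind.obs : TKind → Tm → Heap → Prop
  | .ter => TerObs
  | .err => ErrObs

def Tm.noErr (M : Tm) : Prop := Tm.errv ∉ M.subterms

/-- contextual approximation ≲_y^x : testing with contexts built from x-syntax,
observing y (for y = ter the context may not use the error variable). -/
def CtxApprox (x : Frag) (y : TKind) (Γ : TyCtx) (τ : Ty) (M₁ M₂ : Tm) : Prop :=
  ∀ C τ', Tm.inFrag x C → C.holeCount = 1 → (y = .ter → C.noErr) →
    (∀ N, Typed emptyLocTy Γ none N τ → Typed emptyLocTy [] none (C.fill N) τ') →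
    y.obs (C.fill M₁) Heap.empty → y.obs (C.fill M₂) Heap.empty

/-- γ is a substitution of closed values for the variables in Γ -/
def SubstTyped (St : LocTy) (γ : List Tm) (Γ : TyCtx) : Prop :=
  List.Forall₂ (fun V σ => IsVal V ∧ Typed St [] none V σ) γ Γ

/-- CIU approximation ≲_{ciu,y}^x -/
def CIU (x : Frag) (y : TKind) (Γ : TyCtx) (τ : Ty) (M₁ M₂ : Tm) : Prop :=
  ∀ St h K γ τ',
    HeapTyped St h → Heap.inFrag x h → (y = .ter → ∀ ℓ V, h ℓ = some V → Tm.noErr V) →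
    IsECtx K → Tm.inFrag x K → (y = .ter → K.noErr) → Typed St [] (some τ) K τ' →
    SubstTyped St γ Γ → (∀ V ∈ γ, Tm.inFrag x V) → (y = .ter → ∀ V ∈ γ, Tm.noErr V) →
    y.obs (K.fill (M₁.msubst γ)) h → y.obs (K.fill (M₂.msubst γ)) h

/-- cr-free terms -/
structure CrFreeTm (Γ : TyCtx) (M : Tm) (τ : Ty) : Prop where
  typed : Typed emptyLocTy Γ none M τ
  synt : M.crFreeSyn
  noName : ∀ f, Tm.fname f ∉ M.subterms
  noErrv : M.noErr
  bndΓ : ∀ σ ∈ Γ, σ.crFree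
  bndτ : τ.crFree

/-! ## Abstract values, actions, traces -/

inductive AVal
  | unit | tt | ff
  | int : ℤ → AVal
  | fn : FName → AVal
  | pair : AVal → AVal → AVal

def AVal.toTm : AVal → Tm
  | .unit => .unit
  | .tt => .tt
  | .ff => .ff
  | .int n => .int n
  | .fn f => .fname f
  | .pair a b => .pair a.toTm b.toTm

def AVal.names : AVal → Set Name
  | .fn f => {Name.fn f}
  | .pair a b => a.names ∪ b.names
  | _ => ∅

/-- each name occurs at most once -/
def AVal.linear : AVal → Prop
  | .pair a b => a.linear ∧ b.linear ∧ a.names ∩ b.names = ∅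
  | _ => True

inductive AVal.HasTy : AVal → Ty → Prop
  | unit : AVal.HasTy .unit .unit
  | tt : AVal.HasTy .tt .bool
  | ff : AVal.HasTy .ff .bool
  | int (n : ℤ) : AVal.HasTy (.int n) .int
  | fn (f : FName) : AVal.HasTy (.fn f) (.arrow f.dom f.cod)
  | pair {a b σ τ} : AVal.HasTy a σ → AVal.HasTy b τ → AVal.HasTy (.pair a b) (.prod σ τ)

abbrev FEnv := FName → Option Tm
abbrev KEnv := CName → Option Tm
abbrev XiEnv := CName → Option (Option CName)

/-- decomposition of a closed value into an abstract value pattern and a matching -/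
inductive Decomp : Tm → Ty → AVal → FEnv → Prop
  | unit : Decomp .unit .unit .unit (fun _ => none)
  | tt : Decomp .tt .bool .tt (fun _ => none)
  | ff : Decomp .ff .bool .ff (fun _ => none)
  | int (n : ℤ) : Decomp (.int n) .int (.int n) (fun _ => none)
  | fn {V : Tm} {f : FName} : IsVal V →
      Decomp V (.arrow f.dom f.cod) (.fn f) (Function.update (fun _ => none) f (some V))
  | pair {u v : Tm} {σ τ : Ty} {A B : AVal} {ga gb : FEnv} :
      Decomp u σ A ga → Decomp v τ B gb → (∀ f, ga f = none ∨ gb f = none) →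
      Decomp (.pair u v) (.prod σ τ) (.pair A B) (fun f => (ga f) <|> (gb f))

inductive Act
  | pa : CName → AVal → Act
  | pq : FName → AVal → CName → Act
  | oa : CName → AVal → Act
  | oq : FName → AVal → CName → Act

def Act.isP : Act → Bool
  | .pa _ _ => true
  | .pq _ _ _ => true
  | .oa _ _ => false
  | .oq _ _ _ => false

def Act.dual : Act → Act
  | .pa c A => .oa c A
  | .pq f A c => .oq f A c
  | .oa c A => .pa c A
  | .oq f A c => .pq f A c

/-- names introduced by an action -/
def Act.intro : Act → Set Name
  | .pa _ A => A.names
  | .oa _ A => A.names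
  | .pq _ A c => A.names ∪ {Name.cn c}
  | .oq _ A c => A.names ∪ {Name.cn c}

/-- the name used to communicate -/
def Act.subject : Act → Name
  | .pa c _ => Name.cn c
  | .oa c _ => Name.cn c
  | .pq f _ _ => Name.fn f
  | .oq f _ _ => Name.fn f

def Act.names (a : Act) : Set Name := {a.subject} ∪ a.intro

def Act.wf : Act → Prop
  | .pa _ A => A.linear
  | .oa _ A => A.linear
  | .pq _ A c => A.linear ∧ Name.cn c ∉ A.names
  | .oq _ A c => A.linear ∧ Name.cn c ∉ A.names

def traceNames (t : List Act) : Set Name := {n | ∃ a ∈ t, n ∈ a.names}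

def introducedBefore (pol : Bool) (t : List Act) (i : ℕ) : Set Name :=
  {n | ∃ j, ∃ hj : j < t.length, j < i ∧ (t[j]'hj).isP = pol ∧ n ∈ (t[j]'hj).intro}

/-- (N_O, N_P)-traces -/
def IsTrace (NO NP : Set Name) (t : List Act) : Prop :=
  List.Chain' (fun a b => a.isP ≠ b.isP) t ∧
  (∀ a ∈ t, a.wf) ∧
  (∀ a ∈ t, a.intro ∩ (NO ∪ NP) = ∅) ∧
  (∀ i, ∀ hi : i < t.length, ∀ j, ∀ hj : j < t.length, i ≠ j →
      (t[i]'hi).intro ∩ (t[j]'hj).intro = ∅) ∧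
  (∀ i, ∀ hi : i < t.length,
      (t[i]'hi).subject ∈
        (if (t[i]'hi).isP then NO else NP) ∪ introducedBefore (!(t[i]'hi).isP) t i)

/-! ## The LTS -/

structure ACfg where
  tm : Tm
  cur : CName
  gf : FEnv
  gc : KEnv
  xi : XiEnv
  phi : Set Name
  hp : Heap
  Fm : Name → Option (Set Name)

structure PCfg where
  gf : FEnv
  gc : KEnv
  xi : XiEnv
  phi : Set Name
  hp : Heap
  Fm : Name → Option (Set Name)
  avail : Set Name
  topc : Option CName

inductive Cfg
  | act : ACfg → Cfg
  | pas : PCfg → Cfg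

def joinF (a b : FEnv) : FEnv := fun f => (a f) <|> (b f)

open Classical in
noncomputable def extendF (F : Name → Option (Set Name)) (s av : Set Name) :
    Name → Option (Set Name) :=
  fun n => if n ∈ s then some av else F n

/-- The (unified) LTS. With `vis = bra = false` this is the HOSC[HOSC] LTS;
`vis = true` adds the O-visibility restriction (GOSC[HOSC]);
`bra = true` adds the O-bracketing restriction (HOS[HOSC]); both give GOS[HOSC]. -/
inductive Step : Bool → Bool → Cfg → Option Act → Cfg → Prop
  | tau {vis bra : Bool} {M N : Tm} {c c' : CName} {gf : FEnv} {gc : KEnv} {xi : XiEnv}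
      {phi : Set Name} {h h' : Heap} {F : Name → Option (Set Name)} :
      ERed M c h N c' h' →
      Step vis bra (.act ⟨M, c, gf, gc, xi, phi, h, F⟩) none
        (.act ⟨N, c', gf, gc, xi, phi, h', F⟩)
  | pa {vis bra : Bool} {V : Tm} {c : CName} {A : AVal} {g' : FEnv} {gf : FEnv} {gc : KEnv}
      {xi : XiEnv} {phi : Set Name} {h : Heap} {F : Name → Option (Set Name)} :
      IsVal V → Decomp V c.ty A g' → A.linear → A.names ∩ phi = ∅ →
      Step vis bra (.act ⟨V, c, gf, gc, xi, phi, h, F⟩) (some (.pa c A))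
        (.pas ⟨joinF gf g', gc, xi, phi ∪ A.names, h, F,
               (F (Name.cn c)).getD ∅ ∪ A.names, Option.join (xi c)⟩)
  | pq {vis bra : Bool} {K V : Tm} {f : FName} {A : AVal} {c c' : CName} {g' : FEnv}
      {gf : FEnv} {gc : KEnv} {xi : XiEnv} {phi : Set Name} {h : Heap}
      {F : Name → Option (Set Name)} :
      IsECtx K → IsVal V → Decomp V f.dom A g' → A.linear →
      c'.ty = f.cod → (A.names ∪ {Name.cn c'}) ∩ phi = ∅ → Name.cn c' ∉ A.names →
      Step vis bra (.act ⟨K.fill (.app (.fname f) V), c, gf, gc, xi, phi, h, F⟩)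
        (some (.pq f A c'))
        (.pas ⟨joinF gf g', Function.update gc c' (some K),
               Function.update xi c' (some (some c)),
               phi ∪ A.names ∪ {Name.cn c'}, h, F,
               (F (Name.fn f)).getD ∅ ∪ A.names ∪ {Name.cn c'}, some c'⟩)
  | oa {vis bra : Bool} {K : Tm} {c c' : CName} {A : AVal} {gf : FEnv} {gc : KEnv}
      {xi : XiEnv} {phi : Set Name} {h : Heap} {F : Name → Option (Set Name)}
      {av : Set Name} {tc : Option CName} :
      AVal.HasTy A c.ty → A.linear → A.names ∩ phi = ∅ →
      gc c = some K → xi c = some (some c') →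
      (vis = true → Name.cn c ∈ av) → (bra = true → tc = some c) →
      Step vis bra (.pas ⟨gf, gc, xi, phi, h, F, av, tc⟩) (some (.oa c A))
        (.act ⟨K.fill A.toTm, c', gf, gc, xi, phi ∪ A.names, h, extendF F A.names av⟩)
  | oq {vis bra : Bool} {V : Tm} {f : FName} {A : AVal} {c : CName} {gf : FEnv} {gc : KEnv}
      {xi : XiEnv} {phi : Set Name} {h : Heap} {F : Name → Option (Set Name)}
      {av : Set Name} {tc : Option CName} :
      AVal.HasTy A f.dom → A.linear → c.ty = f.cod →
      (A.names ∪ {Name.cn c}) ∩ phi = ∅ → Name.cn c ∉ A.names →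
      gf f = some V →
      (vis = true → Name.fn f ∈ av) →
      Step vis bra (.pas ⟨gf, gc, xi, phi, h, F, av, tc⟩) (some (.oq f A c))
        (.act ⟨.app V A.toTm, c, gf, gc, Function.update xi c (some tc),
               phi ∪ A.names ∪ {Name.cn c}, h, extendF F (A.names ∪ {Name.cn c}) av⟩)

inductive Steps (vis bra : Bool) : Cfg → List Act → Cfg → Prop
  | nil {C : Cfg} : Steps vis bra C [] C
  | tau {C C' C'' : Cfg} {t : List Act} :
      Step vis bra C none C' → Steps vis bra C' t C'' → Steps vis bra C t C''
  | cons {C C' C'' : Cfg} {a : Act} {t : List Act} :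
      Step vis bra C (some a) C' → Steps vis bra C' t C'' → Steps vis bra C (a :: t) C''

def Traces (vis bra : Bool) (C : Cfg) : Set (List Act) := {t | ∃ C', Steps vis bra C t C'}

/-! ## Initial configurations and trace semantics -/

def AssignTyped (ρ : List AVal) (Γ : TyCtx) : Prop :=
  List.Forall₂ (fun A σ => AVal.HasTy A σ ∧ AVal.linear A) ρ Γ ∧
  List.Pairwise (fun A B => A.names ∩ B.names = ∅) ρ

def assignNames (ρ : List AVal) : Set Name := {n | ∃ A ∈ ρ, n ∈ A.names}

def initTm (M : Tm) (ρ : List AVal) : Tm := M.msubst (ρ.map AVal.toTm)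

def emptyF : Name → Option (Set Name) := fun _ => none

/-- C_M^{ρ,c} = ⟨M{ρ}, c, ∅, ∅, ν(ρ)∪{c}, ∅⟩ -/
def cfgInit (M : Tm) (ρ : List AVal) (c : CName) : Cfg :=
  .act ⟨initTm M ρ, c, (fun _ => none), (fun _ => none), (fun _ => none),
        assignNames ρ ∪ {Name.cn c}, Heap.empty, emptyF⟩

/-- C_{M,bra}^{ρ,c}: ξ initialized with [c ↦ ⊥] -/
def cfgInitBra (M : Tm) (ρ : List AVal) (c : CName) : Cfg :=
  .act ⟨initTm M ρ, c, (fun _ => none), (fun _ => none),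
        Function.update (fun _ => none : XiEnv) c (some none),
        assignNames ρ ∪ {Name.cn c}, Heap.empty, emptyF⟩

def TrSemHOSC (Γ : TyCtx) (τ : Ty) (M : Tm) : Set ((List AVal × CName) × List Act) :=
  {p | AssignTyped p.1.1 Γ ∧ p.1.2.ty = τ ∧ p.2 ∈ Traces false false (cfgInit M p.1.1 p.1.2)}

def TrSemGOSC (Γ : TyCtx) (τ : Ty) (M : Tm) : Set ((List AVal × CName) × List Act) :=
  {p | AssignTyped p.1.1 Γ ∧ p.1.2.ty = τ ∧ p.2 ∈ Traces true false (cfgInit M p.1.1 p.1.2)}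

def TrSemHOS (Γ : TyCtx) (τ : Ty) (M : Tm) : Set ((List AVal × CName) × List Act) :=
  {p | AssignTyped p.1.1 Γ ∧ p.1.2.ty = τ ∧ p.2 ∈ Traces false true (cfgInitBra M p.1.1 p.1.2)}

def TrSemGOS (Γ : TyCtx) (τ : Ty) (M : Tm) : Set ((List AVal × CName) × List Act) :=
  {p | AssignTyped p.1.1 Γ ∧ p.1.2.ty = τ ∧ p.2 ∈ Traces true true (cfgInitBra M p.1.1 p.1.2)}

/-! ## The ◦-translation and context configurations -/

/-- replace err by errn and each cont_τ(K) (with K : τ ⇒ σ) by cont_τ(K, ◦_σ) -/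
def Tm.toCirc : Tm → Tm
  | .errv => .fname errn
  | .contV τ σ K => .contE τ K.toCirc (tern σ)
  | .contE τ K c => .contE τ K.toCirc c
  | .pair a b => .pair a.toCirc b.toCirc
  | .fst a => .fst a.toCirc
  | .snd a => .snd a.toCirc
  | .lam τ a => .lam τ a.toCirc
  | .fix σ τ a => .fix σ τ a.toCirc
  | .app a b => .app a.toCirc b.toCirc
  | .newref τ a => .newref τ a.toCirc
  | .deref a => .deref a.toCirc
  | .assign a b => .assign a.toCirc b.toCirc
  | .ifte a b c => .ifte a.toCirc b.toCirc c.toCirc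
  | .arith op a b => .arith op a.toCirc b.toCirc
  | .cmp op a b => .cmp op a.toCirc b.toCirc
  | .refeq a b => .refeq a.toCirc b.toCirc
  | .callcc τ a => .callcc τ a.toCirc
  | .throw τ a b => .throw τ a.toCirc b.toCirc
  | t => t

def Heap.toCirc (h : Heap) : Heap := fun ℓ => (h ℓ).map Tm.toCirc

/-- (A⃗ᵢ, γ⃗ᵢ) ∈ AVal(γ)(Γ): componentwise decomposition of γ_◦ with mutually
disjoint names avoiding errn -/
def CtxDecomp (γ : List Tm) (Γ : TyCtx) (As : List AVal) (γs : List FEnv) : Prop :=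
  γ.length = Γ.length ∧ As.length = Γ.length ∧ γs.length = Γ.length ∧
  List.Forall₂ (fun (p : Tm × Ty) (q : AVal × FEnv) => Decomp p.1.toCirc p.2 q.1 q.2)
    (γ.zip Γ) (As.zip γs) ∧
  List.Pairwise (fun A B => A.names ∩ B.names = ∅) As ∧
  (∀ A ∈ As, Name.fn errn ∉ A.names) ∧
  (∀ A ∈ As, A.linear)

def stackF (γs : List FEnv) : FEnv := fun f => γs.foldr (fun ρ acc => (ρ f) <|> acc) none

/-- the context configuration C_{h,K,γ}^{γ⃗ᵢ,c} -/
def cfgCtx (h : Heap) (K : Tm) (As : List AVal) (γs : List FEnv) (c : CName) (τ' : Ty) : Cfg :=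
  .pas ⟨stackF γs,
        Function.update (fun _ => none : KEnv) c (some K.toCirc),
        Function.update (fun _ => none : XiEnv) c (some (some (tern τ'))),
        {n | ∃ A ∈ As, n ∈ A.names} ∪ {Name.cn c} ∪ circNames ∪ {Name.fn errn},
        Heap.toCirc h, emptyF, Set.univ, none⟩

/-- the passive configuration of the definability lemmas:
⟨γ_◦ · [c ↦ K_◦], {c ↦ tern_{τ'}}, φ ⊎ {c} ⊎ ◦ ⊎ {errn}, h_◦⟩ -/
def cfgDef (h : Heap) (K : Tm) (γ : FEnv) (c : CName) (τ' : Ty) (φ : Set Name) : Cfg :=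
  .pas ⟨(fun f => (γ f).map Tm.toCirc),
        Function.update (fun _ => none : KEnv) c (some K.toCirc),
        Function.update (fun _ => none : XiEnv) c (some (some (tern τ'))),
        φ ∪ {Name.cn c} ∪ circNames ∪ {Name.fn errn},
        Heap.toCirc h, emptyF, Set.univ, none⟩

/-! ## Name permutations -/

structure NPerm where
  pf : Equiv.Perm FName
  pc : Equiv.Perm CName
  tpf : ∀ f : FName, (pf f).dom = f.dom ∧ (pf f).cod = f.cod
  tpc : ∀ c : CName, (pc c).ty = c.ty

def NPerm.name (π : NPerm) : Name → Name
  | .fn f => .fn (π.pf f)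
  | .cn c => .cn (π.pc c)

def NPerm.fixes (π : NPerm) (X : Set Name) : Prop := ∀ n ∈ X, π.name n = n

def AVal.rename (π : NPerm) : AVal → AVal
  | .fn f => .fn (π.pf f)
  | .pair a b => .pair (a.rename π) (b.rename π)
  | a => a

def Act.rename (π : NPerm) : Act → Act
  | .pa c A => .pa (π.pc c) (A.rename π)
  | .pq f A c => .pq (π.pf f) (A.rename π) (π.pc c)
  | .oa c A => .oa (π.pc c) (A.rename π)
  | .oq f A c => .oq (π.pf f) (A.rename π) (π.pc c)

/-! ## Visibility -/

/-- the set Vis_P(t) of P-visible names of an odd-length (◦⊎{errn}, φ⊎{c})-trace -/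
inductive VisP (φ : Set Name) (c : CName) : List Act → Set Name → Prop
  | ansInit (t : List Act) (A : AVal) :
      VisP φ c (t ++ [.oa c A]) ({Name.fn errn} ∪ circNames ∪ A.names)
  | ansJust {t t' : List Act} {S : Set Name} (f : FName) (A'' : AVal) (c' : CName) (A' : AVal) :
      VisP φ c t S → c' ≠ c →
      VisP φ c (t ++ [.pq f A'' c'] ++ t' ++ [.oa c' A']) (S ∪ A'.names)
  | qInit (t : List Act) (f' : FName) (A' : AVal) (c' : CName) : Name.fn f' ∈ φ →
      VisP φ c (t ++ [.oq f' A' c']) ({Name.fn errn} ∪ circNames ∪ A'.names ∪ {Name.cn c'})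
  | qJustQ {t t' : List Act} {S : Set Name} (f'' : FName) (A'' : AVal) (c'' : CName)
      (f' : FName) (A' : AVal) (c' : CName) :
      VisP φ c t S → Name.fn f' ∈ A''.names →
      VisP φ c (t ++ [.pq f'' A'' c''] ++ t' ++ [.oq f' A' c']) (S ∪ A'.names ∪ {Name.cn c'})
  | qJustA {t t' : List Act} {S : Set Name} (c'' : CName) (A'' : AVal)
      (f' : FName) (A' : AVal) (c' : CName) :
      VisP φ c t S → Name.fn f' ∈ A''.names →
      VisP φ c (t ++ [.pa c'' A''] ++ t' ++ [.oq f' A' c']) (S ∪ A'.names ∪ {Name.cn c'})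

/-- P-visibility of a (◦⊎{errn}, φ⊎{c})-trace -/
def PVisible (φ : Set Name) (c : CName) (t : List Act) : Prop :=
  (∀ pre f A d, pre ++ [Act.pq f A d] <+: t → Even (pre.length + 1) →
      ∃ S, VisP φ c pre S ∧ Name.fn f ∈ S) ∧
  (∀ pre d A, pre ++ [Act.pa d A] <+: t → Even (pre.length + 1) →
      ∃ S, VisP φ c pre S ∧ Name.cn d ∈ S)

/-- the set Vis_O(t) of O-visible names of an odd-length (φ⊎{c}, ∅)-trace -/
inductive VisO (φ : Set Name) (c : CName) : List Act → Set Name → Prop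
  | ansInit (t : List Act) (A : AVal) :
      VisO φ c (t ++ [.pa c A]) A.names
  | ansJust {t t' : List Act} {S : Set Name} (f : FName) (A'' : AVal) (c' : CName) (A' : AVal) :
      VisO φ c t S → c' ≠ c →
      VisO φ c (t ++ [.oq f A'' c'] ++ t' ++ [.pa c' A']) (S ∪ A'.names)
  | qInit (t : List Act) (f' : FName) (A' : AVal) (c' : CName) : Name.fn f' ∈ φ →
      VisO φ c (t ++ [.pq f' A' c']) (A'.names ∪ {Name.cn c'})
  | qJustQ {t t' : List Act} {S : Set Name} (f'' : FName) (A'' : AVal) (c'' : CName)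
      (f' : FName) (A' : AVal) (c' : CName) :
      VisO φ c t S → Name.fn f' ∈ A''.names →
      VisO φ c (t ++ [.oq f'' A'' c''] ++ t' ++ [.pq f' A' c']) (S ∪ A'.names ∪ {Name.cn c'})
  | qJustA {t t' : List Act} {S : Set Name} (c'' : CName) (A'' : AVal)
      (f' : FName) (A' : AVal) (c' : CName) :
      VisO φ c t S → Name.fn f' ∈ A''.names →
      VisO φ c (t ++ [.oa c'' A''] ++ t' ++ [.pq f' A' c']) (S ∪ A'.names ∪ {Name.cn c'})

/-- O-visibility of a (φ⊎{c}, ∅)-trace -/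
def OVisible (φ : Set Name) (c : CName) (t : List Act) : Prop :=
  (∀ pre f A d, pre ++ [Act.oq f A d] <+: t → Even (pre.length + 1) →
      ∃ S, VisO φ c pre S ∧ Name.fn f ∈ S) ∧
  (∀ pre d A, pre ++ [Act.oa d A] <+: t → Even (pre.length + 1) →
      ∃ S, VisO φ c pre S ∧ Name.cn d ∈ S)

/-! ## Bracketing -/

/-- top_P(t) for odd-length ({◦_{τ'},errn}, φ⊎{c})-traces -/
inductive TopP (c : CName) (τ' : Ty) : List Act → Option CName → Prop
  | ansInit (t : List Act) (A : AVal) : TopP c τ' (t ++ [.oa c A]) (some (tern τ'))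
  | ansJust {t₁ t₂ : List Act} {r : Option CName} (f : FName) (A'' : AVal) (c' : CName)
      (A' : AVal) :
      TopP c τ' t₁ r → TopP c τ' (t₁ ++ [.pq f A'' c'] ++ t₂ ++ [.oa c' A']) r
  | quest (t : List Act) (f : FName) (A' : AVal) (c' : CName) :
      TopP c τ' (t ++ [.oq f A' c']) (some c')

/-- P-bracketing: each P-answer answers the current top continuation -/
def PBracketed (c : CName) (τ' : Ty) (t : List Act) : Prop :=
  ∀ pre d A, pre ++ [Act.pa d A] <+: t → ∃ r, TopP c τ' pre r ∧ r = some d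

/-- top_O(t) for odd-length (φ⊎{c}, ∅)-traces; `none` is ⊥ -/
inductive TopO (c : CName) : List Act → Option CName → Prop
  | ansInit (t : List Act) (A : AVal) : TopO c (t ++ [.pa c A]) none
  | ansJust {t₁ t₂ : List Act} {r : Option CName} (f : FName) (A'' : AVal) (c' : CName)
      (A' : AVal) :
      TopO c t₁ r → TopO c (t₁ ++ [.oq f A'' c'] ++ t₂ ++ [.pa c' A']) r
  | quest (t : List Act) (f : FName) (A' : AVal) (c' : CName) :
      TopO c (t ++ [.pq f A' c']) (some c')

/-- O-bracketing: each O-answer answers the current top continuation -/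
def OBracketed (c : CName) (t : List Act) : Prop :=
  ∀ pre d A, pre ++ [Act.oa d A] <+: t → TopO c pre (some d)

/-- complete traces -/
def CompleteTr (c : CName) (t : List Act) : Prop :=
  Odd t.length ∧ OBracketed c t ∧ TopO c t none

/-- trace inclusion restricted to complete traces -/
def TrIncC (S₁ S₂ : Set ((List AVal × CName) × List Act)) : Prop :=
  ∀ p ∈ S₁, CompleteTr p.1.2 p.2 → p ∈ S₂

/-- recursive computation of ν -/
def namesR : Tm → Set Name
  | .fname f => {Name.fn f}
  | .pair a b => namesR a ∪ namesR b
  | .fst a => namesR a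
  | .snd a => namesR a
  | .lam _ a => namesR a
  | .fix _ _ a => namesR a
  | .app a b => namesR a ∪ namesR b
  | .newref _ a => namesR a
  | .deref a => namesR a
  | .assign a b => namesR a ∪ namesR b
  | .ifte a b c => namesR a ∪ namesR b ∪ namesR c
  | .arith _ a b => namesR a ∪ namesR b
  | .cmp _ a b => namesR a ∪ namesR b
  | .refeq a b => namesR a ∪ namesR b
  | .callcc _ a => namesR a
  | .throw _ a b => namesR a ∪ namesR b
  | .contV _ _ K => namesR K
  | .contE _ K c => insert (Name.cn c) (namesR K)
  | _ => ∅

lemma mem_names (M : Tm) (n : Name) : n ∈ M.names ↔ n ∈ namesR M := by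
  induction M <;>
    simp_all [Tm.names, Tm.subterms, namesR, Set.mem_setOf_eq, exists_or] <;>
    aesop

lemma names_eq (M : Tm) : M.names = namesR M := Set.ext fun n => mem_names M n

lemma unionW {s s' t t' v : Set Name} (h1 : s ⊆ s' ∪ v) (h2 : t ⊆ t' ∪ v) :
    s ∪ t ⊆ s' ∪ t' ∪ v := by
  intro x hx
  rcases hx with h | h
  · rcases h1 h with h' | h'
    · exact Or.inl (Or.inl h')
    · exact Or.inr h'
  · rcases h2 h with h' | h'
    · exact Or.inl (Or.inr h')
    · exact Or.inr h'

lemma unionW3 {s s' t t' u u' v : Set Name} (h1 : s ⊆ s' ∪ v) (h2 : t ⊆ t' ∪ v)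
    (h3 : u ⊆ u' ∪ v) : s ∪ t ∪ u ⊆ s' ∪ t' ∪ u' ∪ v :=
  unionW (unionW h1 h2) h3

lemma insertW {s t v : Set Name} {n : Name} (h : s ⊆ t ∪ v) :
    insert n s ⊆ insert n t ∪ v := by
  intro x hx
  rcases hx with rfl | hx
  · exact Or.inl (Or.inl rfl)
  · rcases h hx with h' | h'
    · exact Or.inl (Or.inr h')
    · exact Or.inr h'

lemma namesR_ofBool (b : Bool) : namesR (Tm.ofBool b) = ∅ := by
  cases b <;> simp [Tm.ofBool, namesR]

lemma namesR_subst (t : Tm) : ∀ k V, namesR (t.subst k V) ⊆ namesR t ∪ namesR V := by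
  induction t <;> intro k V <;> simp only [Tm.subst, namesR]
  case bvar i =>
    split
    · exact Set.subset_union_right
    · split <;> simp [namesR]
  all_goals
    first
    | exact Set.subset_union_left
    | (rename_i ih; exact ih _ V)
    | (rename_i ih; exact insertW (ih _ V))
    | (rename_i iha ihb; exact unionW (iha _ V) (ihb _ V))
    | (rename_i iha ihb ihc; exact unionW3 (iha _ V) (ihb _ V) (ihc _ V))

lemma namesR_fill (T : Tm) : ∀ X, namesR (T.fill X) ⊆ namesR T ∪ namesR X := by
  induction T <;> intro X <;> simp only [Tm.fill, namesR]
  case hole => exact Set.subset_union_right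
  all_goals
    first
    | exact Set.subset_union_left
    | (rename_i ih; exact ih X)
    | (rename_i iha ihb; exact unionW (iha X) (ihb X))
    | (rename_i iha ihb ihc; exact unionW3 (iha X) (ihb X) (ihc X))

lemma namesR_le_fill (T : Tm) : ∀ X, namesR T ⊆ namesR (T.fill X) := by
  induction T <;> intro X <;> simp only [Tm.fill, namesR]
  all_goals
    first
    | exact subset_rfl
    | exact Set.empty_subset _
    | (rename_i ih; exact ih X)
    | (rename_i iha ihb; exact Set.union_subset_union (iha X) (ihb X))
    | (rename_i iha ihb ihc;
       exact Set.union_subset_union (Set.union_subset_union (iha X) (ihb X)) (ihc X))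

lemma fill_lower : ∀ (T : Tm), 1 ≤ T.holeCount → ∀ X, namesR X ⊆ namesR (T.fill X) := by
  intro T
  induction T <;> intro hc X <;> simp only [Tm.holeCount, Tm.fill, namesR] at *
  all_goals
    first
    | exact subset_rfl
    | omega
    | (rename_i ih; exact ih hc X)
    | (rename_i a b iha ihb
       by_cases h1 : 1 ≤ a.holeCount
       · exact (iha h1 X).trans Set.subset_union_left
       · exact (ihb (by omega) X).trans Set.subset_union_right)
    | (rename_i a b c iha ihb ihc
       by_cases h1 : 1 ≤ a.holeCount
       · exact (iha h1 X).trans (Set.subset_union_left.trans Set.subset_union_left)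
       · by_cases h2 : 1 ≤ b.holeCount
         · exact (ihb h2 X).trans (Set.subset_union_right.trans Set.subset_union_left)
         · exact (ihc (by omega) X).trans Set.subset_union_right)

lemma ectx_holeCount {K : Tm} (h : IsECtx K) : 1 ≤ K.holeCount := by
  induction h <;> simp [Tm.holeCount] <;> omega

lemma ground_val_names {St : LocTy} {V : Tm} {τ : Ty}
    (hv : IsVal V) (hty : Typed St [] none V τ) (hg : Ty.Ground τ) :
    namesR V = ∅ := by
  cases hty <;>
    first
    | (simp [namesR]; done)
    | (cases hg; done)
    | (cases hv; done)
    | simp_all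

/-- GOSC internal reductions never introduce new names: if
(M,c,h) → (M',c',h') in the extended semantics with M a GOSC term and h a GOSC heap
(storing only ground-type values), then ν(M') ∪ {c'} ⊆ ν(M) ∪ {c}. -/
theorem gosc_reduction_names
    (M M' : Tm) (c c' : CName) (h h' : Heap)
    (hM : Tm.inFragX Frag.GOSC M)
    (hhf : Heap.inFragX Frag.GOSC h)
    (hty : ∃ St : LocTy, (∀ ℓ τ, St ℓ = some τ → Ty.Ground τ) ∧ HeapTyped St h ∧
            ∀ ℓ, (h ℓ).isSome = true → (St ℓ).isSome = true)
    (st : ERed M c h M' c' h') :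
    M'.names ∪ {Name.cn c'} ⊆ M.names ∪ {Name.cn c} := by
  obtain ⟨St, hgr, hht, hdom⟩ := hty
  rw [names_eq, names_eq]
  cases st with
  | base hK hred =>
    apply Set.union_subset _ Set.subset_union_right
    refine (namesR_fill _ _).trans (Set.union_subset
      ((namesR_le_fill _ _).trans Set.subset_union_left) ?_)
    refine Set.Subset.trans ?_
      ((fill_lower _ (ectx_holeCount hK) _).trans Set.subset_union_left)
    cases hred with
    | beta hV => exact namesR_subst _ _ _
    | fixbeta hV =>
      refine (namesR_subst _ _ _).trans ?_
      simp only [namesR]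
      exact Set.union_subset ((namesR_subst _ _ _).trans subset_rfl) Set.subset_union_left
    | fst h1 h2 => simp only [namesR]; exact Set.subset_union_left
    | snd h1 h2 => simp only [namesR]; exact Set.subset_union_right
    | iftt => exact fun x hx => Or.inl (Or.inr hx)
    | ifff => exact fun x hx => Or.inr hx
    | arith => simp [namesR]
    | cmp => simp [namesR, namesR_ofBool]
    | refeq => simp [namesR, namesR_ofBool]
    | deref hl =>
      obtain ⟨τ, hτ⟩ := Option.isSome_iff_exists.mp
        (hdom _ (Option.isSome_iff_exists.mpr ⟨_, hl⟩))
      obtain ⟨V', hV', hval, htyV⟩ := hht _ τ hτ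
      rw [hl] at hV'
      cases hV'
      rw [ground_val_names hval htyV (hgr _ _ hτ)]
      exact Set.empty_subset _
    | newref hV hl => simp [namesR]
    | assign hV hl => simp [namesR]
  | callcc hK =>
    apply Set.union_subset _ Set.subset_union_right
    intro x hx
    rcases namesR_fill _ _ hx with hx | hx
    · exact Or.inl (namesR_le_fill _ _ hx)
    · have hx' := namesR_subst _ _ _ hx
      simp only [namesR, Set.mem_union, Set.mem_insert_iff] at hx'
      rcases hx' with hb | rfl | hk
      · refine Or.inl ((fill_lower _ (ectx_holeCount hK) _) ?_)
        simpa [namesR] using hb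
      · exact Or.inr rfl
      · exact Or.inl (namesR_le_fill _ _ hk)
  | throw hK hK' hV =>
    rename_i τ σ Kk Kk' Vv
    have h0 := fill_lower Kk (ectx_holeCount hK) (Tm.throw τ Vv (Tm.contE σ Kk' c'))
    simp only [namesR] at h0
    intro x hx
    simp only [Set.mem_union, Set.mem_singleton_iff] at hx
    rcases hx with hx | rfl
    · rcases namesR_fill _ _ hx with hx | hx
      · exact Or.inl (h0 (Or.inr (Set.mem_insert_iff.mpr (Or.inr hx))))
      · exact Or.inl (h0 (Or.inl hx))
    · exact Or.inl (h0 (Or.inr (Set.mem_insert_iff.mpr (Or.inl rfl))))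

end OGS
end

section
/- For every cr-free HOSC term Γ ⊢ M : τ, Γ-assignment ρ and continuation name c : τ: t ∈ Tr_GOSC(C_{M,vis}^{ρ,c}) if and only if t ∈ Tr_HOSC(C_M^{ρ,c}) and t is O-visible. -/
set_option maxHeartbeats 1000000
set_option autoImplicit true

namespace OGS

/-! ### Auxiliary development -/

/-- recursive name-set of a term -/
def nset : Tm → Set Name
  | .fname f => {Name.fn f}
  | .pair a b => nset a ∪ nset b
  | .fst a => nset a
  | .snd a => nset a
  | .lam _ a => nset a
  | .fix _ _ a => nset a
  | .app a b => nset a ∪ nset b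
  | .newref _ a => nset a
  | .deref a => nset a
  | .assign a b => nset a ∪ nset b
  | .ifte a b c => nset a ∪ nset b ∪ nset c
  | .arith _ a b => nset a ∪ nset b
  | .cmp _ a b => nset a ∪ nset b
  | .refeq a b => nset a ∪ nset b
  | .callcc _ a => nset a
  | .throw _ a b => nset a ∪ nset b
  | .contV _ _ K => nset K
  | .contE _ K c => nset K ∪ {Name.cn c}
  | _ => ∅

lemma uu2 {S1 S2 A B V : Set Name} (h1 : S1 ⊆ A ∪ V) (h2 : S2 ⊆ B ∪ V) :
    S1 ∪ S2 ⊆ A ∪ B ∪ V := by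
  intro n hn
  rcases hn with h | h
  · have := h1 h; revert this; simp only [Set.mem_union]; tauto
  · have := h2 h; revert this; simp only [Set.mem_union]; tauto

lemma uu3 {S1 S2 S3 A B C V : Set Name} (h1 : S1 ⊆ A ∪ V) (h2 : S2 ⊆ B ∪ V)
    (h3 : S3 ⊆ C ∪ V) : S1 ∪ S2 ∪ S3 ⊆ A ∪ B ∪ C ∪ V := by
  intro n hn
  rcases hn with (h | h) | h
  · have := h1 h; revert this; simp only [Set.mem_union]; tauto
  · have := h2 h; revert this; simp only [Set.mem_union]; tauto
  · have := h3 h; revert this; simp only [Set.mem_union]; tauto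

lemma uuC {S A V C : Set Name} (h : S ⊆ A ∪ V) : S ∪ C ⊆ A ∪ C ∪ V := by
  intro n hn
  rcases hn with h' | h'
  · have := h h'; revert this; simp only [Set.mem_union]; tauto
  · exact Or.inl (Or.inr h')

lemma nset_subst (M : Tm) (k : ℕ) (V : Tm) : nset (M.subst k V) ⊆ nset M ∪ nset V := by
  induction M generalizing k <;>
    simp only [Tm.subst, nset] <;>
    try (solve_by_elim (maxDepth := 8)
      [uu2, uu3, uuC, Set.empty_subset, Set.subset_union_left, Set.subset_union_right])
  case bvar i =>
    split
    · exact Set.subset_union_right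
    · split <;> simp [nset]

lemma nset_fill_sub (C M : Tm) : nset (C.fill M) ⊆ nset C ∪ nset M := by
  induction C <;>
    simp only [Tm.fill, nset] <;>
    solve_by_elim (maxDepth := 8)
      [uu2, uu3, uuC, Set.empty_subset, Set.subset_union_left, Set.subset_union_right]

lemma nset_fill_sup (C M : Tm) : nset C ⊆ nset (C.fill M) := by
  induction C <;>
    simp only [Tm.fill, nset] <;>
    solve_by_elim (maxDepth := 8)
      [Set.union_subset_union, Set.empty_subset, subset_rfl]

lemma nset_fill_hole {K : Tm} (hK : IsECtx K) (M : Tm) : nset M ⊆ nset (K.fill M) := by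
  induction hK <;> simp only [Tm.fill, nset] <;>
    solve_by_elim (maxDepth := 8)
      [Set.subset_union_of_subset_left, Set.subset_union_of_subset_right, subset_rfl]

lemma nset_msubst (γ : List Tm) (M : Tm) :
    nset (M.msubst γ) ⊆ nset M ∪ {n | ∃ V ∈ γ, n ∈ nset V} := by
  induction γ generalizing M with
  | nil => simp [Tm.msubst]
  | cons V γ ih =>
    have h1 : Tm.msubst M (V :: γ) = Tm.msubst (M.subst 0 V) γ := rfl
    rw [h1]
    refine (ih _).trans ?_
    intro n hn
    rcases hn with h | h
    · have := nset_subst M 0 V h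
      rcases this with h' | h'
      · exact Or.inl h'
      · exact Or.inr ⟨V, by simp, h'⟩
    · rcases h with ⟨W, hW, hn⟩
      exact Or.inr ⟨W, by simp [hW], hn⟩

lemma nset_toTm (A : AVal) : nset A.toTm = A.names := by
  induction A <;> simp_all [AVal.toTm, nset, AVal.names]

lemma aval_names_fn (A : AVal) : ∀ n ∈ A.names, ∃ f, n = Name.fn f := by
  induction A <;> simp_all [AVal.names] <;> tauto

lemma assignNames_fn (ρ : List AVal) : ∀ n ∈ assignNames ρ, ∃ f, n = Name.fn f := by
  intro n hn
  obtain ⟨A, _, hA⟩ := hn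
  exact aval_names_fn A n hA

lemma mem_subterms_self (M : Tm) : M ∈ M.subterms := by
  cases M <;> simp [Tm.subterms]

lemma nset_empty_of_crfree {M : Tm} (h1 : ∀ f, Tm.fname f ∉ M.subterms)
    (h2 : ∀ τ K c, Tm.contE τ K c ∉ M.subterms) : nset M = ∅ := by
  induction M <;>
    simp only [Tm.subterms, List.mem_cons, List.mem_append, List.mem_singleton] at h1 h2 <;>
    simp only [nset] <;>
    (try (exfalso; exact h1 _ (by tauto))) <;>
    (try (exfalso; exact h2 _ _ _ (by tauto))) <;>
    simp_all <;> tauto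

/-- names appearing in a heap -/
def hset (h : Heap) : Set Name := {n | ∃ ℓ V, h ℓ = some V ∧ n ∈ nset V}

lemma nset_ofBool (b : Bool) : nset (Tm.ofBool b) = ∅ := by cases b <;> simp [Tm.ofBool, nset]

lemma redbase_pres {M M' : Tm} {h h' : Heap} (hr : RedBase M h M' h') :
    nset M' ⊆ nset M ∪ hset h ∧ ∀ ℓ V, h' ℓ = some V → nset V ⊆ nset M ∪ hset h := by
  cases hr with
  | beta hV =>
    constructor
    · refine (nset_subst _ _ _).trans ?_
      simp only [nset]
      exact Set.subset_union_left
    · intro ℓ W hW; exact fun n hn => Or.inr ⟨ℓ, W, hW, hn⟩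
  | fixbeta hV =>
    constructor
    · refine ((nset_subst _ _ _).trans ?_).trans Set.subset_union_left
      refine Set.union_subset ((nset_subst _ _ _).trans ?_) ?_ <;>
        simp only [nset] <;> intro n hn <;>
        simp only [Set.mem_union] at hn ⊢ <;> tauto
    · intro ℓ W hW; exact fun n hn => Or.inr ⟨ℓ, W, hW, hn⟩
  | fst hv1 hv2 =>
    exact ⟨fun n hn => Or.inl (Or.inl hn), fun ℓ W hW n hn => Or.inr ⟨ℓ, W, hW, hn⟩⟩
  | snd hv1 hv2 =>
    exact ⟨fun n hn => Or.inl (Or.inr hn), fun ℓ W hW n hn => Or.inr ⟨ℓ, W, hW, hn⟩⟩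
  | iftt => exact ⟨fun n hn => Or.inl (Or.inl (Or.inr hn)), fun ℓ W hW n hn => Or.inr ⟨ℓ, W, hW, hn⟩⟩
  | ifff => exact ⟨fun n hn => Or.inl (Or.inr hn), fun ℓ W hW n hn => Or.inr ⟨ℓ, W, hW, hn⟩⟩
  | arith => exact ⟨by simp [nset], fun ℓ W hW n hn => Or.inr ⟨ℓ, W, hW, hn⟩⟩
  | cmp => exact ⟨by simp [nset, nset_ofBool], fun ℓ W hW n hn => Or.inr ⟨ℓ, W, hW, hn⟩⟩
  | refeq => exact ⟨by simp [nset, nset_ofBool], fun ℓ W hW n hn => Or.inr ⟨ℓ, W, hW, hn⟩⟩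
  | deref h1 =>
    exact ⟨fun n hn => Or.inr ⟨_, _, h1, hn⟩, fun ℓ' W hW n hn => Or.inr ⟨ℓ', W, hW, hn⟩⟩
  | newref hV hnone =>
    rename_i τ V ℓ
    constructor
    · simp [nset]
    · intro ℓ' W hW n hn
      by_cases hl : ℓ' = ℓ
      · subst hl
        simp only [Heap.upd, if_pos rfl] at hW
        cases hW
        exact Or.inl hn
      · simp only [Heap.upd, if_neg hl] at hW
        exact Or.inr ⟨ℓ', W, hW, hn⟩
  | assign hV hne =>
    rename_i ℓ V
    constructor
    · simp [nset]
    · intro ℓ' W hW n hn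
      by_cases hl : ℓ' = ℓ
      · subst hl
        simp only [Heap.upd, if_pos rfl] at hW
        cases hW
        exact Or.inl (Or.inr hn)
      · simp only [Heap.upd, if_neg hl] at hW
        exact Or.inr ⟨ℓ', W, hW, hn⟩

lemma ered_pres {M N : Tm} {c0 c1 : CName} {h h' : Heap} {S : Set Name}
    (hr : ERed M c0 h N c1 h') (hM : nset M ⊆ S)
    (hh : ∀ ℓ V, h ℓ = some V → nset V ⊆ S) (hc : Name.cn c0 ∈ S) :
    nset N ⊆ S ∧ (∀ ℓ V, h' ℓ = some V → nset V ⊆ S) ∧ Name.cn c1 ∈ S := by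
  have hhs : hset h ⊆ S := by
    rintro n ⟨ℓ, V, hV, hn⟩; exact hh ℓ V hV hn
  cases hr with
  | base hK hb =>
    rename_i K M1 M1'
    obtain ⟨hb1, hb2⟩ := redbase_pres hb
    have hKS : nset K ⊆ S := (nset_fill_sup K M1).trans hM
    have hM1S : nset M1 ⊆ S := (nset_fill_hole hK M1).trans hM
    have hM1' : nset M1' ⊆ S := hb1.trans (Set.union_subset hM1S hhs)
    refine ⟨(nset_fill_sub K M1').trans (Set.union_subset hKS hM1'), ?_, hc⟩
    intro ℓ V hV
    exact (hb2 ℓ V hV).trans (Set.union_subset hM1S hhs)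
  | callcc hK =>
    rename_i τ K M1
    have hKS : nset K ⊆ S := (nset_fill_sup K _).trans hM
    have hM1S : nset M1 ⊆ S := by
      have := (nset_fill_hole hK (Tm.callcc τ M1)).trans hM
      simpa [nset] using this
    refine ⟨?_, hh, hc⟩
    refine (nset_fill_sub K _).trans (Set.union_subset hKS ?_)
    refine (nset_subst _ _ _).trans (Set.union_subset hM1S ?_)
    simp only [nset]
    exact Set.union_subset hKS (by simpa using hc)
  | throw hK hK' hV =>
    rename_i τ σ K K' V
    have hin : nset (Tm.throw τ V (Tm.contE σ K' c1)) ⊆ S :=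
      (nset_fill_hole hK _).trans hM
    simp only [nset] at hin
    rw [Set.union_subset_iff, Set.union_subset_iff] at hin
    obtain ⟨hVS, hK'S, hcS⟩ := hin
    exact ⟨(nset_fill_sub K' V).trans (Set.union_subset hK'S hVS), hh,
      hcS (by simp)⟩

lemma decomp_nset {V : Tm} {τ : Ty} {A : AVal} {g : FEnv} (hd : Decomp V τ A g) :
    ∀ f W, g f = some W → nset W ⊆ nset V := by
  induction hd with
  | unit => intro f W hW; simp at hW
  | tt => intro f W hW; simp at hW
  | ff => intro f W hW; simp at hW
  | int n => intro f W hW; simp at hW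
  | fn hV =>
    intro f' W hW
    rename_i V' f
    by_cases hf : f' = f
    · subst hf
      simp [Function.update] at hW
      subst hW; exact subset_rfl
    · simp [Function.update, hf] at hW
  | @pair u v σ' τ' A B ga gb hda hdb hdisj iha ihb =>
    intro f W hW
    simp only [] at hW
    cases hga : ga f with
    | some X =>
      rw [hga] at hW
      simp only [Option.orElse_eq_orElse, Option.orElse_some, Option.some.injEq] at hW
      subst hW
      simp only [nset]
      exact (iha f _ hga).trans Set.subset_union_left
    | none =>
      rw [hga] at hW
      simp only [Option.orElse_eq_orElse, Option.orElse_none] at hW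
      simp only [nset]
      exact (ihb f W hW).trans Set.subset_union_right

/-! ### Trace infrastructure -/

def introSet (t : List Act) : Set Name := {n | ∃ a ∈ t, n ∈ a.intro}

def OIntro (t : List Act) : Set Name :=
  {n | ∃ i, ∃ hi : i < t.length, (t[i]'hi).isP = false ∧ n ∈ (t[i]'hi).intro}

/-- all names introduced along `t` are fresh: distinct from the initial names
`φ ∪ {c}` and from all names introduced earlier -/
def FreshTr (φ : Set Name) (c : CName) (t : List Act) : Prop :=
  ∀ i, ∀ hi : i < t.length,
    (t[i]'hi).intro ∩ (φ ∪ {Name.cn c} ∪ introSet (t.take i)) = ∅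

lemma getElem_snoc_last (t : List Act) (a : Act) (h : t.length < (t ++ [a]).length) :
    (t ++ [a])[t.length]'h = a := by
  rw [List.getElem_append_right (le_refl _)]
  simp

lemma getElem_append_cons (t₁ t₂ : List Act) (a : Act)
    (h : t₁.length < (t₁ ++ a :: t₂).length) : (t₁ ++ a :: t₂)[t₁.length]'h = a := by
  rw [List.getElem_append_right (le_refl _)]
  simp

lemma introSet_nil : introSet [] = ∅ := by simp [introSet]

lemma introSet_snoc (t : List Act) (a : Act) :
    introSet (t ++ [a]) = introSet t ∪ a.intro := by
  ext n
  constructor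
  · rintro ⟨b, hb, hn⟩
    rcases List.mem_append.1 hb with h | h
    · exact Or.inl ⟨b, h, hn⟩
    · obtain rfl := List.mem_singleton.1 h
      exact Or.inr hn
  · rintro (⟨b, hb, hn⟩ | hn)
    · exact ⟨b, List.mem_append_left _ hb, hn⟩
    · exact ⟨a, List.mem_append_right _ (List.mem_singleton_self a), hn⟩

lemma OIntro_mono_snoc {t : List Act} {a : Act} : OIntro t ⊆ OIntro (t ++ [a]) := by
  rintro n ⟨i, hi, hP, hn⟩
  refine ⟨i, by simp; omega, ?_, ?_⟩ <;>
    rw [List.getElem_append_left hi] <;> assumption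

lemma OIntro_snoc_P {t : List Act} {a : Act} (ha : a.isP = true) :
    OIntro (t ++ [a]) = OIntro t := by
  ext n
  constructor
  · rintro ⟨i, hi, hP, hn⟩
    rcases Nat.lt_or_ge i t.length with h | h
    · exact ⟨i, h, by rwa [List.getElem_append_left h] at hP,
        by rwa [List.getElem_append_left h] at hn⟩
    · exfalso
      have hi' : i < t.length + 1 := by simpa using hi
      have : i = t.length := by omega
      subst this
      rw [getElem_snoc_last] at hP
      simp [ha] at hP
  · exact fun h => OIntro_mono_snoc h

lemma OIntro_snoc_O {t : List Act} {a : Act} (ha : a.isP = false) :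
    OIntro (t ++ [a]) = OIntro t ∪ a.intro := by
  ext n
  constructor
  · rintro ⟨i, hi, hP, hn⟩
    rcases Nat.lt_or_ge i t.length with h | h
    · exact Or.inl ⟨i, h, by rwa [List.getElem_append_left h] at hP,
        by rwa [List.getElem_append_left h] at hn⟩
    · have hi' : i < t.length + 1 := by simpa using hi
      have : i = t.length := by omega
      subst this
      rw [getElem_snoc_last] at hn
      exact Or.inr hn
  · rintro (h | h)
    · exact OIntro_mono_snoc h
    · refine ⟨t.length, by simp, ?_, ?_⟩ <;> rw [getElem_snoc_last]
      · exact ha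
      · exact h

lemma OIntro_subset_introSet (t : List Act) : OIntro t ⊆ introSet t := by
  rintro n ⟨i, hi, _, hn⟩
  exact ⟨t[i]'hi, List.getElem_mem hi, hn⟩

lemma introSet_take_subset (t : List Act) (k : ℕ) : introSet (t.take k) ⊆ introSet t := by
  rintro n ⟨a, ha, hn⟩
  exact ⟨a, (List.take_prefix k t).subset ha, hn⟩

lemma freshTr_nil (φ : Set Name) (c : CName) : FreshTr φ c [] := by
  intro i hi; simp at hi

lemma freshTr_snoc {φ : Set Name} {c : CName} {t : List Act} {a : Act}
    (hf : FreshTr φ c t) (ha : a.intro ∩ (φ ∪ {Name.cn c} ∪ introSet t) = ∅) :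
    FreshTr φ c (t ++ [a]) := by
  intro i hi
  rcases Nat.lt_or_ge i t.length with h | h
  · rw [List.getElem_append_left h, List.take_append_of_le_length (by omega)]
    exact hf i h
  · have hi' : i < t.length + 1 := by simpa using hi
    have : i = t.length := by omega
    subst this
    rw [getElem_snoc_last]
    rwa [List.take_left]

lemma freshTr_take {φ : Set Name} {c : CName} {t : List Act} (hf : FreshTr φ c t)
    (k : ℕ) : FreshTr φ c (t.take k) := by
  intro i hi
  have hik : i < k := by
    have := hi; rw [List.length_take] at this; omega
  have hit : i < t.length := by
    have := hi; rw [List.length_take] at this; omega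
  have e1 : (t.take k)[i]'hi = t[i]'hit := List.getElem_take ..
  have e2 : (t.take k).take i = t.take i := by
    rw [List.take_take]; congr 1; omega
  rw [e1, e2]
  exact hf i hit

lemma freshTr_not_init {φ : Set Name} {c : CName} {t : List Act} (hf : FreshTr φ c t)
    {i : ℕ} (hi : i < t.length) {n : Name} (hn : n ∈ (t[i]'hi).intro)
    (hn' : n ∈ φ ∪ {Name.cn c}) : False := by
  have h2 : n ∈ (t[i]'hi).intro ∩ (φ ∪ {Name.cn c} ∪ introSet (t.take i)) :=
    ⟨hn, Or.inl hn'⟩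
  rw [hf i hi] at h2
  exact h2

lemma freshTr_not_both {φ : Set Name} {c : CName} {t : List Act} (hf : FreshTr φ c t)
    {i j : ℕ} (hi : i < t.length) (hj : j < t.length) (hij : i < j) {n : Name}
    (h1 : n ∈ (t[i]'hi).intro) (h2 : n ∈ (t[j]'hj).intro) : False := by
  have hmem : t[i]'hi ∈ t.take j := by
    have hlen : i < (t.take j).length := by rw [List.length_take]; omega
    have e : (t.take j)[i]'hlen = t[i]'hi := List.getElem_take ..
    rw [← e]
    exact List.getElem_mem hlen
  have h3 : n ∈ (t[j]'hj).intro ∩ (φ ∪ {Name.cn c} ∪ introSet (t.take j)) :=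
    ⟨h2, Or.inr ⟨t[i]'hi, hmem, h1⟩⟩
  rw [hf j hj] at h3
  exact h3

lemma cn_not_OIntro {φ : Set Name} {c : CName} {t : List Act} (hf : FreshTr φ c t) :
    Name.cn c ∉ OIntro t := by
  rintro ⟨i, hi, _, hn⟩
  exact freshTr_not_init hf hi hn (Or.inr rfl)

/-- unique justification: a name is introduced at (at most) one position -/
lemma split_unique {φ : Set Name} {c : CName} {l : List Act} (hfr : FreshTr φ c l)
    {t₁ t₂ u₁ u₂ : List Act} {a₁ a₂ : Act}
    (h1 : l = t₁ ++ a₁ :: t₂) (h2 : l = u₁ ++ a₂ :: u₂) {m : Name}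
    (hm1 : m ∈ a₁.intro) (hm2 : m ∈ a₂.intro) : t₁ = u₁ ∧ a₁ = a₂ ∧ t₂ = u₂ := by
  have hi : t₁.length < l.length := by subst h1; simp
  have hj : u₁.length < l.length := by subst h2; simp
  have e1 : l[t₁.length]'hi = a₁ := by
    subst h1; exact getElem_append_cons ..
  have e2 : l[u₁.length]'hj = a₂ := by
    subst h2; exact getElem_append_cons ..
  have hlen : t₁.length = u₁.length := by
    rcases Nat.lt_trichotomy t₁.length u₁.length with h | h | h
    · exact absurd (freshTr_not_both hfr hi hj h (e1 ▸ hm1) (e2 ▸ hm2)) not_false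
    · exact h
    · exact absurd (freshTr_not_both hfr hj hi h (e2 ▸ hm2) (e1 ▸ hm1)) not_false
  have h3 := h1.symm.trans h2
  obtain ⟨ht, hc⟩ := List.append_inj h3 hlen
  injection hc with hc1 hc2
  exact ⟨ht, hc1, hc2⟩

/-! ### Determinism of O-visibility sets on fresh traces -/

lemma snoc_eq_snoc {l₁ l₂ : List Act} {a b : Act} (h : l₁ ++ [a] = l₂ ++ [b]) :
    l₁ = l₂ ∧ a = b := by
  obtain ⟨h1, h2⟩ := List.append_inj' h rfl
  refine ⟨h1, ?_⟩
  simpa using h2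

lemma freshTr_prefix {φ : Set Name} {c : CName} {l₁ l₂ : List Act}
    (hf : FreshTr φ c (l₁ ++ l₂)) : FreshTr φ c l₁ := by
  have := freshTr_take hf l₁.length
  rwa [List.take_left] at this

lemma visO_cases {φ : Set Name} {c : CName} {t : List Act} {S : Set Name}
    (h : VisO φ c t S) :
    (∃ t₀ A, t = t₀ ++ [Act.pa c A] ∧ S = A.names) ∨
    (∃ t₁ f A'' c' t₂ A' S₀, t = t₁ ++ [Act.oq f A'' c'] ++ t₂ ++ [Act.pa c' A'] ∧
      c' ≠ c ∧ VisO φ c t₁ S₀ ∧ S = S₀ ∪ A'.names) ∨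
    (∃ t₀ f' A' c', t = t₀ ++ [Act.pq f' A' c'] ∧ Name.fn f' ∈ φ ∧
      S = A'.names ∪ {Name.cn c'}) ∨
    (∃ t₁ f'' A'' c'' t₂ f' A' c' S₀,
      t = t₁ ++ [Act.oq f'' A'' c''] ++ t₂ ++ [Act.pq f' A' c'] ∧ VisO φ c t₁ S₀ ∧
      Name.fn f' ∈ A''.names ∧ S = S₀ ∪ A'.names ∪ {Name.cn c'}) ∨
    (∃ t₁ c'' A'' t₂ f' A' c' S₀,
      t = t₁ ++ [Act.oa c'' A''] ++ t₂ ++ [Act.pq f' A' c'] ∧ VisO φ c t₁ S₀ ∧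
      Name.fn f' ∈ A''.names ∧ S = S₀ ∪ A'.names ∪ {Name.cn c'}) := by
  cases h with
  | ansInit t₀ A => exact Or.inl ⟨t₀, A, rfl, rfl⟩
  | @ansJust t₁ t₂ S₀ f A'' c' A' hv hne =>
    exact Or.inr (Or.inl ⟨t₁, f, A'', c', t₂, A', S₀, rfl, hne, hv, rfl⟩)
  | qInit t₀ f' A' c' hφ => exact Or.inr (Or.inr (Or.inl ⟨t₀, f', A', c', rfl, hφ, rfl⟩))
  | @qJustQ t₁ t₂ S₀ f'' A'' c'' f' A' c' hv hm =>
    exact Or.inr (Or.inr (Or.inr (Or.inl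
      ⟨t₁, f'', A'', c'', t₂, f', A', c', S₀, rfl, hv, hm, rfl⟩)))
  | @qJustA t₁ t₂ S₀ c'' A'' f' A' c' hv hm =>
    exact Or.inr (Or.inr (Or.inr (Or.inr
      ⟨t₁, c'', A'', t₂, f', A', c', S₀, rfl, hv, hm, rfl⟩)))

lemma visO_det_aux {φ : Set Name} {c : CName} :
    ∀ n (t : List Act), t.length ≤ n → FreshTr φ c t →
      ∀ S S', VisO φ c t S → VisO φ c t S' → S = S' := by
  intro n
  induction n with
  | zero =>
    intro t ht hf S S' h1 _
    cases h1 <;> simp at ht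
  | succ n ih =>
    intro t ht hf S S' h1 h2
    rcases visO_cases h1 with
      ⟨t₀, A, rfl, rfl⟩ |
      ⟨t₁, f, A'', c', t₂, A', S₀, rfl, hne1, hv1, rfl⟩ |
      ⟨t₀, f', A', c', rfl, hphi1, rfl⟩ |
      ⟨t₁, f'', A'', c'', t₂, f', A', c', S₀, rfl, hv1, hm1, rfl⟩ |
      ⟨t₁, c'', A'', t₂, f', A', c', S₀, rfl, hv1, hm1, rfl⟩ <;>
    rcases visO_cases h2 with
      ⟨u₀, B, heq2, rfl⟩ |
      ⟨u₁, g, B'', d', u₂, B', T₀, heq2, hne2, hv2, rfl⟩ |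
      ⟨u₀, g', B', d', heq2, hphi2, rfl⟩ |
      ⟨u₁, g'', B'', d'', u₂, g', B', d', T₀, heq2, hv2, hm2, rfl⟩ |
      ⟨u₁, d'', B'', u₂, g', B', d', T₀, heq2, hv2, hm2, rfl⟩
    -- (1,1)
    · obtain ⟨-, hlast⟩ := snoc_eq_snoc heq2.symm
      injection hlast with e1 e2
      rw [e2]
    -- (1,2)
    · obtain ⟨-, hlast⟩ := snoc_eq_snoc heq2.symm
      injection hlast with e1 e2
      exact absurd e1 hne2
    -- (1,3)
    · obtain ⟨-, hlast⟩ := snoc_eq_snoc heq2.symm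
      simp at hlast
    -- (1,4)
    · obtain ⟨-, hlast⟩ := snoc_eq_snoc heq2.symm
      simp at hlast
    -- (1,5)
    · obtain ⟨-, hlast⟩ := snoc_eq_snoc heq2.symm
      simp at hlast
    -- (2,1)
    · obtain ⟨-, hlast⟩ := snoc_eq_snoc heq2.symm
      injection hlast with e1 e2
      exact absurd e1.symm hne1
    -- (2,2)
    · obtain ⟨hpre, hlast⟩ := snoc_eq_snoc heq2.symm
      injection hlast with e1 e2
      subst e1; subst e2
      have hfrP : FreshTr φ c (t₁ ++ Act.oq f A'' d' :: t₂) := by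
        have h' : FreshTr φ c (t₁ ++ [Act.oq f A'' d'] ++ t₂) := freshTr_prefix hf
        simpa using h'
      obtain ⟨e3, -, -⟩ := split_unique hfrP rfl
        (show t₁ ++ Act.oq f A'' d' :: t₂ = u₁ ++ Act.oq g B'' d' :: u₂ by
          simpa using hpre.symm)
        (show Name.cn d' ∈ (Act.oq f A'' d').intro from Or.inr rfl)
        (show Name.cn d' ∈ (Act.oq g B'' d').intro from Or.inr rfl)
      subst e3
      have hlen : t₁.length ≤ n := by
        simp only [List.length_append, List.length_cons, List.length_nil] at ht
        omega
      have hfr1 : FreshTr φ c t₁ := freshTr_prefix hfrP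
      rw [ih t₁ hlen hfr1 S₀ T₀ hv1 hv2]
    -- (2,3)
    · obtain ⟨-, hlast⟩ := snoc_eq_snoc heq2.symm
      simp at hlast
    -- (2,4)
    · obtain ⟨-, hlast⟩ := snoc_eq_snoc heq2.symm
      simp at hlast
    -- (2,5)
    · obtain ⟨-, hlast⟩ := snoc_eq_snoc heq2.symm
      simp at hlast
    -- (3,1)
    · obtain ⟨-, hlast⟩ := snoc_eq_snoc heq2.symm
      simp at hlast
    -- (3,2)
    · obtain ⟨-, hlast⟩ := snoc_eq_snoc heq2.symm
      simp at hlast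
    -- (3,3)
    · obtain ⟨-, hlast⟩ := snoc_eq_snoc heq2.symm
      injection hlast with e1 e2 e3
      rw [e2, e3]
    -- (3,4)
    · obtain ⟨hpre, hlast⟩ := snoc_eq_snoc heq2.symm
      injection hlast with e1 e2 e3
      exfalso
      have hfr0 : FreshTr φ c (u₁ ++ Act.oq g'' B'' d'' :: u₂) := by
        have h' : FreshTr φ c t₀ := freshTr_prefix hf
        rw [hpre.symm] at h'
        simpa using h'
      have hidx : u₁.length < (u₁ ++ Act.oq g'' B'' d'' :: u₂).length := by simp
      refine freshTr_not_init hfr0 hidx (n := Name.fn f') ?_ (Or.inl hphi1)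
      rw [getElem_append_cons]
      exact Or.inl (e1 ▸ hm2)
    -- (3,5)
    · obtain ⟨hpre, hlast⟩ := snoc_eq_snoc heq2.symm
      injection hlast with e1 e2 e3
      exfalso
      have hfr0 : FreshTr φ c (u₁ ++ Act.oa d'' B'' :: u₂) := by
        have h' : FreshTr φ c t₀ := freshTr_prefix hf
        rw [hpre.symm] at h'
        simpa using h'
      have hidx : u₁.length < (u₁ ++ Act.oa d'' B'' :: u₂).length := by simp
      refine freshTr_not_init hfr0 hidx (n := Name.fn f') ?_ (Or.inl hphi1)
      rw [getElem_append_cons]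
      exact e1 ▸ hm2
    -- (4,1)
    · obtain ⟨-, hlast⟩ := snoc_eq_snoc heq2.symm
      simp at hlast
    -- (4,2)
    · obtain ⟨-, hlast⟩ := snoc_eq_snoc heq2.symm
      simp at hlast
    -- (4,3)
    · obtain ⟨hpre, hlast⟩ := snoc_eq_snoc heq2.symm
      injection hlast with e1 e2 e3
      exfalso
      have hfr0 : FreshTr φ c (t₁ ++ Act.oq f'' A'' c'' :: t₂) := by
        have h' : FreshTr φ c (t₁ ++ [Act.oq f'' A'' c''] ++ t₂) := freshTr_prefix hf
        simpa using h'
      have hidx : t₁.length < (t₁ ++ Act.oq f'' A'' c'' :: t₂).length := by simp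
      refine freshTr_not_init hfr0 hidx (n := Name.fn f') ?_ (Or.inl (e1 ▸ hphi2))
      rw [getElem_append_cons]
      exact Or.inl hm1
    -- (4,4)
    · obtain ⟨hpre, hlast⟩ := snoc_eq_snoc heq2.symm
      injection hlast with e1 e2 e3
      subst e1; subst e2; subst e3
      have hfrP : FreshTr φ c (t₁ ++ Act.oq f'' A'' c'' :: t₂) := by
        have h' : FreshTr φ c (t₁ ++ [Act.oq f'' A'' c''] ++ t₂) := freshTr_prefix hf
        simpa using h'
      obtain ⟨e4, -, -⟩ := split_unique hfrP rfl
        (show t₁ ++ Act.oq f'' A'' c'' :: t₂ = u₁ ++ Act.oq g'' B'' d'' :: u₂ by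
          simpa using hpre.symm)
        (show Name.fn g' ∈ (Act.oq f'' A'' c'').intro from Or.inl hm1)
        (show Name.fn g' ∈ (Act.oq g'' B'' d'').intro from Or.inl hm2)
      subst e4
      have hlen : t₁.length ≤ n := by
        simp only [List.length_append, List.length_cons, List.length_nil] at ht
        omega
      have hfr1 : FreshTr φ c t₁ := freshTr_prefix hfrP
      rw [ih t₁ hlen hfr1 S₀ T₀ hv1 hv2]
    -- (4,5)
    · obtain ⟨hpre, hlast⟩ := snoc_eq_snoc heq2.symm
      injection hlast with e1 e2 e3
      subst e1; subst e2; subst e3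
      exfalso
      have hfrP : FreshTr φ c (t₁ ++ Act.oq f'' A'' c'' :: t₂) := by
        have h' : FreshTr φ c (t₁ ++ [Act.oq f'' A'' c''] ++ t₂) := freshTr_prefix hf
        simpa using h'
      obtain ⟨-, e4, -⟩ := split_unique hfrP rfl
        (show t₁ ++ Act.oq f'' A'' c'' :: t₂ = u₁ ++ Act.oa d'' B'' :: u₂ by
          simpa using hpre.symm)
        (show Name.fn g' ∈ (Act.oq f'' A'' c'').intro from Or.inl hm1)
        (show Name.fn g' ∈ (Act.oa d'' B'').intro from hm2)
      simp at e4
    -- (5,1)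
    · obtain ⟨-, hlast⟩ := snoc_eq_snoc heq2.symm
      simp at hlast
    -- (5,2)
    · obtain ⟨-, hlast⟩ := snoc_eq_snoc heq2.symm
      simp at hlast
    -- (5,3)
    · obtain ⟨hpre, hlast⟩ := snoc_eq_snoc heq2.symm
      injection hlast with e1 e2 e3
      exfalso
      have hfr0 : FreshTr φ c (t₁ ++ Act.oa c'' A'' :: t₂) := by
        have h' : FreshTr φ c (t₁ ++ [Act.oa c'' A''] ++ t₂) := freshTr_prefix hf
        simpa using h'
      have hidx : t₁.length < (t₁ ++ Act.oa c'' A'' :: t₂).length := by simp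
      refine freshTr_not_init hfr0 hidx (n := Name.fn f') ?_ (Or.inl (e1 ▸ hphi2))
      rw [getElem_append_cons]
      exact hm1
    -- (5,4)
    · obtain ⟨hpre, hlast⟩ := snoc_eq_snoc heq2.symm
      injection hlast with e1 e2 e3
      subst e1; subst e2; subst e3
      exfalso
      have hfrP : FreshTr φ c (t₁ ++ Act.oa c'' A'' :: t₂) := by
        have h' : FreshTr φ c (t₁ ++ [Act.oa c'' A''] ++ t₂) := freshTr_prefix hf
        simpa using h'
      obtain ⟨-, e4, -⟩ := split_unique hfrP rfl
        (show t₁ ++ Act.oa c'' A'' :: t₂ = u₁ ++ Act.oq g'' B'' d'' :: u₂ by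
          simpa using hpre.symm)
        (show Name.fn g' ∈ (Act.oa c'' A'').intro from hm1)
        (show Name.fn g' ∈ (Act.oq g'' B'' d'').intro from Or.inl hm2)
      simp at e4
    -- (5,5)
    · obtain ⟨hpre, hlast⟩ := snoc_eq_snoc heq2.symm
      injection hlast with e1 e2 e3
      subst e1; subst e2; subst e3
      have hfrP : FreshTr φ c (t₁ ++ Act.oa c'' A'' :: t₂) := by
        have h' : FreshTr φ c (t₁ ++ [Act.oa c'' A''] ++ t₂) := freshTr_prefix hf
        simpa using h'
      obtain ⟨e4, -, -⟩ := split_unique hfrP rfl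
        (show t₁ ++ Act.oa c'' A'' :: t₂ = u₁ ++ Act.oa d'' B'' :: u₂ by
          simpa using hpre.symm)
        (show Name.fn g' ∈ (Act.oa c'' A'').intro from hm1)
        (show Name.fn g' ∈ (Act.oa d'' B'').intro from hm2)
      subst e4
      have hlen : t₁.length ≤ n := by
        simp only [List.length_append, List.length_cons, List.length_nil] at ht
        omega
      have hfr1 : FreshTr φ c t₁ := freshTr_prefix hfrP
      rw [ih t₁ hlen hfr1 S₀ T₀ hv1 hv2]

lemma visO_det {φ : Set Name} {c : CName} {t : List Act} (hf : FreshTr φ c t)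
    {S S' : Set Name} (h1 : VisO φ c t S) (h2 : VisO φ c t S') : S = S' :=
  visO_det_aux t.length t le_rfl hf S S' h1 h2

/-! ### The visibility invariant on configurations -/

def goodS (φ : Set Name) (c : CName) (t : List Act) : Set Name :=
  φ ∪ {Name.cn c} ∪ OIntro t

def FGood (φ : Set Name) (c : CName) (t : List Act) (F : Name → Option (Set Name)) : Prop :=
  ∀ n, (F n = none ∧ n ∉ OIntro t) ∨
    (∃ i, ∃ hi : i < t.length, (t[i]'hi).isP = false ∧ n ∈ (t[i]'hi).intro ∧
      ∃ S, VisO φ c (t.take i) S ∧ F n = some S)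

structure InvA (φ : Set Name) (c : CName) (t : List Act) (a : ACfg) : Prop where
  ev : Even t.length
  hphi : a.phi = φ ∪ {Name.cn c} ∪ introSet t
  hfr : FreshTr φ c t
  hcur : a.cur = c ∨ Name.cn a.cur ∈ OIntro t
  htm : nset a.tm ⊆ goodS φ c t
  hheap : ∀ ℓ V, a.hp ℓ = some V → nset V ⊆ goodS φ c t
  hgf : ∀ f V, a.gf f = some V → nset V ⊆ goodS φ c t
  hgc : ∀ d K, a.gc d = some K → nset K ⊆ goodS φ c t ∧ Name.cn d ∈ a.phi
  hxi : ∀ d c', a.gc d ≠ none → a.xi d = some (some c') → c' = c ∨ Name.cn c' ∈ OIntro t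
  hF : FGood φ c t a.Fm

structure InvP (φ : Set Name) (c : CName) (t : List Act) (p : PCfg) : Prop where
  odd : Odd t.length
  hphi : p.phi = φ ∪ {Name.cn c} ∪ introSet t
  hfr : FreshTr φ c t
  hheap : ∀ ℓ V, p.hp ℓ = some V → nset V ⊆ goodS φ c t
  hgf : ∀ f V, p.gf f = some V → nset V ⊆ goodS φ c t
  hgc : ∀ d K, p.gc d = some K → nset K ⊆ goodS φ c t ∧ Name.cn d ∈ p.phi
  hxi : ∀ d c', p.gc d ≠ none → p.xi d = some (some c') → c' = c ∨ Name.cn c' ∈ OIntro t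
  hF : FGood φ c t p.Fm
  hav : VisO φ c t p.avail

lemma goodS_snoc_P {φ : Set Name} {c : CName} {t : List Act} {α : Act}
    (h : α.isP = true) : goodS φ c (t ++ [α]) = goodS φ c t := by
  rw [goodS, goodS, OIntro_snoc_P h]

lemma goodS_snoc_O {φ : Set Name} {c : CName} {t : List Act} {α : Act}
    (h : α.isP = false) : goodS φ c (t ++ [α]) = goodS φ c t ∪ α.intro := by
  rw [goodS, goodS, OIntro_snoc_O h, ← Set.union_assoc]

lemma split_at {t : List Act} {i : ℕ} (hi : i < t.length) :
    t = t.take i ++ (t[i]'hi) :: t.drop (i+1) := by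
  induction t generalizing i with
  | nil => simp at hi
  | cons a l ih =>
    cases i with
    | zero => simp
    | succ i =>
      simp only [List.take_succ_cons, List.getElem_cons_succ, List.drop_succ_cons,
        List.cons_append]
      congr 1
      exact ih (by simpa using hi)

lemma FGood_snoc_P {φ : Set Name} {c : CName} {t : List Act} {F : Name → Option (Set Name)}
    {α : Act} (hP : α.isP = true) (h : FGood φ c t F) : FGood φ c (t ++ [α]) F := by
  intro n
  rcases h n with ⟨h1, h2⟩ | ⟨i, hi, hO, hn, S, hS, hF⟩
  · exact Or.inl ⟨h1, by rwa [OIntro_snoc_P hP]⟩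
  · refine Or.inr ⟨i, by simp; omega, ?_, ?_, S, ?_, hF⟩
    · rwa [List.getElem_append_left hi]
    · rwa [List.getElem_append_left hi]
    · rwa [List.take_append_of_le_length (by omega)]

lemma FGood_snoc_O {φ : Set Name} {c : CName} {t : List Act} {F : Name → Option (Set Name)}
    {α : Act} {av : Set Name} (hO : α.isP = false) (h : FGood φ c t F)
    (hav : VisO φ c t av) : FGood φ c (t ++ [α]) (extendF F α.intro av) := by
  intro n
  by_cases hn : n ∈ α.intro
  · refine Or.inr ⟨t.length, by simp, ?_, ?_, av, ?_, ?_⟩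
    · rw [getElem_snoc_last]; exact hO
    · rw [getElem_snoc_last]; exact hn
    · rwa [List.take_left]
    · simp [extendF, hn]
  · have he : extendF F α.intro av n = F n := by simp [extendF, hn]
    rcases h n with ⟨h1, h2⟩ | ⟨i, hi, hOi, hni, S, hS, hF⟩
    · refine Or.inl ⟨by rw [he]; exact h1, ?_⟩
      rw [OIntro_snoc_O hO]
      rintro (h' | h')
      · exact h2 h'
      · exact hn h'
    · refine Or.inr ⟨i, by simp; omega, ?_, ?_, S, ?_, by rw [he]; exact hF⟩
      · rwa [List.getElem_append_left hi]
      · rwa [List.getElem_append_left hi]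
      · rwa [List.take_append_of_le_length (by omega)]

lemma O_act_cn {α : Act} (hO : α.isP = false) {d : CName} (hd : Name.cn d ∈ α.intro) :
    ∃ f A, α = Act.oq f A d := by
  cases α with
  | pa c0 A => simp [Act.isP] at hO
  | pq f A c0 => simp [Act.isP] at hO
  | oa c0 A =>
    obtain ⟨f, hf⟩ := aval_names_fn A _ hd
    cases hf
  | oq f A c0 =>
    rcases hd with h | h
    · obtain ⟨g, hg⟩ := aval_names_fn A _ h
      cases hg
    · have : d = c0 := by injection h
      subst this
      exact ⟨f, A, rfl⟩

lemma O_act_fn {α : Act} (hO : α.isP = false) {g : FName} (hg : Name.fn g ∈ α.intro) :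
    (∃ c0 A, α = Act.oa c0 A ∧ Name.fn g ∈ A.names) ∨
    (∃ f A c0, α = Act.oq f A c0 ∧ Name.fn g ∈ A.names) := by
  cases α with
  | pa c0 A => simp [Act.isP] at hO
  | pq f A c0 => simp [Act.isP] at hO
  | oa c0 A => exact Or.inl ⟨c0, A, rfl, hg⟩
  | oq f A c0 =>
    rcases hg with h | h
    · exact Or.inr ⟨f, A, c0, rfl, h⟩
    · cases h

lemma FGood_oint {φ : Set Name} {c : CName} {t : List Act} {F : Name → Option (Set Name)}
    (hF : FGood φ c t F) {n : Name} (hn : n ∈ OIntro t) :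
    ∃ i, ∃ hi : i < t.length, (t[i]'hi).isP = false ∧ n ∈ (t[i]'hi).intro ∧
      ∃ S, VisO φ c (t.take i) S ∧ F n = some S := by
  rcases hF n with ⟨_, hno⟩ | h
  · exact absurd hn hno
  · exact h

lemma visO_ans {φ : Set Name} {c : CName} {t : List Act} {F : Name → Option (Set Name)}
    (hfr : FreshTr φ c t) (hF : FGood φ c t F) {c0 : CName}
    (hc0 : c0 = c ∨ Name.cn c0 ∈ OIntro t) (A : AVal) :
    VisO φ c (t ++ [Act.pa c0 A]) ((F (Name.cn c0)).getD ∅ ∪ A.names) := by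
  rcases hc0 with rfl | hO
  · have hFn : F (Name.cn c0) = none := by
      rcases hF (Name.cn c0) with ⟨h1, _⟩ | ⟨i, hi, hOi, hni, _⟩
      · exact h1
      · exact absurd (⟨i, hi, hOi, hni⟩ : Name.cn c0 ∈ OIntro t) (cn_not_OIntro hfr)
    rw [hFn]
    simp only [Option.getD_none]
    rw [Set.empty_union]
    exact VisO.ansInit t A
  · obtain ⟨i, hi, hOi, hni, S, hS, hFe⟩ := FGood_oint hF hO
    obtain ⟨f'', A'', hti⟩ := O_act_cn hOi hni
    have hne : c0 ≠ c := by
      rintro rfl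
      exact (cn_not_OIntro hfr) hO
    have hsplit := split_at hi
    rw [hti] at hsplit
    have hv := VisO.ansJust (φ := φ) (c := c) (t := t.take i) (t' := t.drop (i+1))
      f'' A'' c0 A hS hne
    rw [hFe]
    simp only [Option.getD_some]
    have heq : t ++ [Act.pa c0 A]
        = t.take i ++ [Act.oq f'' A'' c0] ++ t.drop (i+1) ++ [Act.pa c0 A] := by
      conv_lhs => rw [hsplit]
      simp
    rw [heq]
    exact hv

lemma visO_quest {φ : Set Name} {c : CName} {t : List Act} {F : Name → Option (Set Name)}
    (hfr : FreshTr φ c t) (hF : FGood φ c t F) {f : FName}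
    (hfS : Name.fn f ∈ goodS φ c t) (A : AVal) (c' : CName) :
    VisO φ c (t ++ [Act.pq f A c'])
      ((F (Name.fn f)).getD ∅ ∪ A.names ∪ {Name.cn c'}) := by
  rcases hfS with (hin | hc) | hO
  · have hFn : F (Name.fn f) = none := by
      rcases hF (Name.fn f) with ⟨h1, _⟩ | ⟨i, hi, hOi, hni, _⟩
      · exact h1
      · exact absurd (freshTr_not_init hfr hi hni (Or.inl hin)) not_false
    rw [hFn]
    simp only [Option.getD_none]
    rw [Set.empty_union]
    exact VisO.qInit t f A c' hin
  · exact absurd hc (by simp)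
  · obtain ⟨i, hi, hOi, hni, S, hS, hFe⟩ := FGood_oint hF hO
    rcases O_act_fn hOi hni with ⟨c'', A'', hti, hm⟩ | ⟨f'', A'', c'', hti, hm⟩
    · have hsplit := split_at hi
      rw [hti] at hsplit
      have hv := VisO.qJustA (φ := φ) (c := c) (t := t.take i) (t' := t.drop (i+1))
        c'' A'' f A c' hS hm
      rw [hFe]
      simp only [Option.getD_some]
      have heq : t ++ [Act.pq f A c']
          = t.take i ++ [Act.oa c'' A''] ++ t.drop (i+1) ++ [Act.pq f A c'] := by
        conv_lhs => rw [hsplit]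
        simp
      rw [heq]
      exact hv
    · have hsplit := split_at hi
      rw [hti] at hsplit
      have hv := VisO.qJustQ (φ := φ) (c := c) (t := t.take i) (t' := t.drop (i+1))
        f'' A'' c'' f A c' hS hm
      rw [hFe]
      simp only [Option.getD_some]
      have heq : t ++ [Act.pq f A c']
          = t.take i ++ [Act.oq f'' A'' c''] ++ t.drop (i+1) ++ [Act.pq f A c'] := by
        conv_lhs => rw [hsplit]
        simp
      rw [heq]
      exact hv

lemma invA_tau {φ : Set Name} {c : CName} {t : List Act}
    {M N : Tm} {c0 c1 : CName} {gf : FEnv} {gc : KEnv} {xi : XiEnv} {phi : Set Name}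
    {h h' : Heap} {F : Name → Option (Set Name)}
    (hred : ERed M c0 h N c1 h')
    (hI : InvA φ c t ⟨M, c0, gf, gc, xi, phi, h, F⟩)
    (hφ : ∀ n ∈ φ, ∃ f, n = Name.fn f) :
    InvA φ c t ⟨N, c1, gf, gc, xi, phi, h', F⟩ := by
  obtain ⟨ev, hphi, hfr, hcur, htm, hheap, hgf, hgc, hxi, hF⟩ := hI
  have hcS : Name.cn c0 ∈ goodS φ c t := by
    rcases hcur with hc | hc
    · have hc' : c0 = c := hc
      exact Or.inl (Or.inr (by simp [hc']))
    · exact Or.inr hc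
  obtain ⟨h1, h2, h3⟩ := ered_pres hred htm hheap hcS
  refine ⟨ev, hphi, hfr, ?_, h1, h2, hgf, hgc, hxi, hF⟩
  rcases h3 with (hin | hcc) | hO
  · obtain ⟨f, hf⟩ := hφ _ hin
    cases hf
  · left
    exact Name.cn.inj hcc
  · right; exact hO

lemma step_P {v : Bool} {φ : Set Name} {c : CName} {t : List Act} {a : ACfg} {α : Act}
    {C' : Cfg} (hs : Step v false (.act a) (some α) C')
    (hI : InvA φ c t a) (hφ : ∀ n ∈ φ, ∃ g, n = Name.fn g) :
    ∃ p, C' = .pas p ∧ InvP φ c (t ++ [α]) p ∧ α.isP = true ∧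
      Step true false (.act a) (some α) C' := by
  obtain ⟨ev, hphi, hfr, hcur, htm, hheap, hgf, hgc, hxi, hF⟩ := hI
  cases hs with
  | pa hV hdec hlin hdisj =>
    rename_i V c0 A g' gf gc xi phi hp F
    refine ⟨_, rfl, ?_, rfl, Step.pa hV hdec hlin hdisj⟩
    have hphi' : phi = φ ∪ {Name.cn c} ∪ introSet t := hphi
    have hcur' : c0 = c ∨ Name.cn c0 ∈ OIntro t := hcur
    have htm' : nset V ⊆ goodS φ c t := htm
    have hP : (Act.pa c0 A).isP = true := rfl
    have hint : (Act.pa c0 A).intro = A.names := rfl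
    refine ⟨?_, ?_, ?_, ?_, ?_, ?_, ?_, ?_, ?_⟩
    · simpa using Even.add_one ev
    · show phi ∪ A.names = _
      rw [hphi', introSet_snoc, hint, Set.union_assoc]
    · exact freshTr_snoc hfr (by rw [hint, ← hphi']; exact hdisj)
    · intro ℓ W hW
      rw [goodS_snoc_P hP]
      exact hheap ℓ W hW
    · intro f W hW
      have hW' : joinF gf g' f = some W := hW
      rw [goodS_snoc_P hP]
      cases hgff : gf f with
      | some U =>
        have he : joinF gf g' f = some U := by simp [joinF, hgff]
        rw [he] at hW'
        injection hW' with hW'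
        subst hW'
        exact hgf f U hgff
      | none =>
        have he : joinF gf g' f = g' f := by simp [joinF, hgff]
        rw [he] at hW'
        exact (decomp_nset hdec f W hW').trans htm'
    · intro d K hK
      have hK' : gc d = some K := hK
      rw [goodS_snoc_P hP]
      exact ⟨(hgc d K hK').1, Set.mem_union_left _ (hgc d K hK').2⟩
    · intro d c₂ hne hxid
      rw [OIntro_snoc_P hP]
      exact hxi d c₂ hne hxid
    · exact FGood_snoc_P hP hF
    · exact visO_ans hfr hF hcur' A
  | pq hK hV hdec hlin hty hdisj hnotin =>
    rename_i K V f A c0 c' g' gf gc xi phi hp F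
    refine ⟨_, rfl, ?_, rfl, Step.pq hK hV hdec hlin hty hdisj hnotin⟩
    have hphi' : phi = φ ∪ {Name.cn c} ∪ introSet t := hphi
    have hcur' : c0 = c ∨ Name.cn c0 ∈ OIntro t := hcur
    have htm' : nset (K.fill ((Tm.fname f).app V)) ⊆ goodS φ c t := htm
    have hP : (Act.pq f A c').isP = true := rfl
    have hint : (Act.pq f A c').intro = A.names ∪ {Name.cn c'} := rfl
    have hfS : Name.fn f ∈ goodS φ c t :=
      htm' (nset_fill_hole hK _ (Or.inl rfl))
    refine ⟨?_, ?_, ?_, ?_, ?_, ?_, ?_, ?_, ?_⟩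
    · simpa using Even.add_one ev
    · show phi ∪ A.names ∪ {Name.cn c'} = _
      rw [hphi', introSet_snoc, hint, Set.union_assoc, Set.union_assoc]
    · exact freshTr_snoc hfr (by rw [hint, ← hphi']; exact hdisj)
    · intro ℓ W hW
      rw [goodS_snoc_P hP]
      exact hheap ℓ W hW
    · intro g W hW
      have hW' : joinF gf g' g = some W := hW
      rw [goodS_snoc_P hP]
      cases hgff : gf g with
      | some U =>
        have he : joinF gf g' g = some U := by simp [joinF, hgff]
        rw [he] at hW'
        injection hW' with hW'
        subst hW'
        exact hgf g U hgff
      | none =>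
        have he : joinF gf g' g = g' g := by simp [joinF, hgff]
        rw [he] at hW'
        have hVsub : nset V ⊆ goodS φ c t := fun n hn =>
          htm' (nset_fill_hole hK _ (Or.inr hn))
        exact (decomp_nset hdec g W hW').trans hVsub
    · intro d K₂ hK₂
      have hK₂' : Function.update gc c' (some K) d = some K₂ := hK₂
      rw [goodS_snoc_P hP]
      by_cases hd : d = c'
      · subst hd
        rw [Function.update_self] at hK₂'
        injection hK₂' with hK₂'
        subst hK₂'
        constructor
        · exact (nset_fill_sup K _).trans htm'
        · exact Or.inr rfl
      · rw [Function.update_of_ne hd] at hK₂'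
        exact ⟨(hgc d K₂ hK₂').1,
          Set.mem_union_left _ (Set.mem_union_left _ (hgc d K₂ hK₂').2)⟩
    · intro d c₂ hne hxid
      have hxid' : Function.update xi c' (some (some c0)) d = some (some c₂) := hxid
      have hne' : Function.update gc c' (some K) d ≠ none := hne
      rw [OIntro_snoc_P hP]
      by_cases hd : d = c'
      · subst hd
        rw [Function.update_self] at hxid'
        have he : c0 = c₂ := by
          injection hxid' with h'
          injection h'
        subst he
        exact hcur'
      · rw [Function.update_of_ne hd] at hxid'
        rw [Function.update_of_ne hd] at hne'
        exact hxi d c₂ hne' hxid'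
    · exact FGood_snoc_P hP hF
    · exact visO_quest hfr hF hfS A c'

lemma step_O {v : Bool} {φ : Set Name} {c : CName} {t : List Act} {p : PCfg} {α : Act}
    {C' : Cfg} (hs : Step v false (.pas p) (some α) C')
    (hI : InvP φ c t p) (hφ : ∀ n ∈ φ, ∃ g, n = Name.fn g) :
    (∃ a', C' = .act a' ∧ InvA φ c (t ++ [α]) a' ∧ α.isP = false) ∧
    (v = true → α.subject ∈ p.avail) ∧
    (α.subject ∈ p.avail → Step true false (.pas p) (some α) C') := by
  obtain ⟨odd, hphi, hfr, hheap, hgf, hgc, hxi, hF, hav⟩ := hI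
  cases hs with
  | oa hty hlin hdisj hgcK hxiK hvis hbra =>
    rename_i K c0 c1 A gf gc xi phi hp F av tc
    have hphi' : phi = φ ∪ {Name.cn c} ∪ introSet t := hphi
    have hav' : VisO φ c t av := hav
    have hO : (Act.oa c0 A).isP = false := rfl
    have hint : (Act.oa c0 A).intro = A.names := rfl
    refine ⟨⟨_, rfl, ?_, rfl⟩, fun hv => hvis hv, fun hsub =>
      Step.oa hty hlin hdisj hgcK hxiK (fun _ => hsub) hbra⟩
    refine ⟨?_, ?_, ?_, ?_, ?_, ?_, ?_, ?_, ?_, ?_⟩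
    · simpa using Odd.add_one odd
    · show phi ∪ A.names = _
      rw [hphi', introSet_snoc, hint, Set.union_assoc]
    · exact freshTr_snoc hfr (by rw [hint, ← hphi']; exact hdisj)
    · show c1 = c ∨ Name.cn c1 ∈ OIntro (t ++ [Act.oa c0 A])
      have hne : gc c0 ≠ none := by rw [hgcK]; exact Option.some_ne_none K
      rcases hxi c0 c1 hne hxiK with h | h
      · exact Or.inl h
      · exact Or.inr (OIntro_mono_snoc h)
    · show nset (K.fill A.toTm) ⊆ _
      rw [goodS_snoc_O hO, hint]
      refine (nset_fill_sub K _).trans (Set.union_subset ?_ ?_)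
      · exact (hgc c0 K hgcK).1.trans Set.subset_union_left
      · rw [nset_toTm]
        exact Set.subset_union_right
    · intro ℓ W hW
      rw [goodS_snoc_O hO]
      exact (hheap ℓ W hW).trans Set.subset_union_left
    · intro g W hW
      rw [goodS_snoc_O hO]
      exact (hgf g W hW).trans Set.subset_union_left
    · intro d K₂ hK₂
      have hK₂' : gc d = some K₂ := hK₂
      rw [goodS_snoc_O hO]
      exact ⟨(hgc d K₂ hK₂').1.trans Set.subset_union_left,
        Set.mem_union_left _ (hgc d K₂ hK₂').2⟩
    · intro d c₂ hne hxid
      have hxid' : xi d = some (some c₂) := hxid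
      have hne' : gc d ≠ none := hne
      rcases hxi d c₂ hne' hxid' with h | h
      · exact Or.inl h
      · exact Or.inr (OIntro_mono_snoc h)
    · show FGood φ c (t ++ [Act.oa c0 A]) (extendF F A.names av)
      exact FGood_snoc_O hO hF hav'
  | oq hty hlin hcod hdisj hnotin hgfV hvis =>
    rename_i V f A c0 gf gc xi phi hp F av tc
    have hphi' : phi = φ ∪ {Name.cn c} ∪ introSet t := hphi
    have hav' : VisO φ c t av := hav
    have hO : (Act.oq f A c0).isP = false := rfl
    have hint : (Act.oq f A c0).intro = A.names ∪ {Name.cn c0} := rfl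
    refine ⟨⟨_, rfl, ?_, rfl⟩, fun hv => hvis hv, fun hsub =>
      Step.oq hty hlin hcod hdisj hnotin hgfV (fun _ => hsub)⟩
    refine ⟨?_, ?_, ?_, ?_, ?_, ?_, ?_, ?_, ?_, ?_⟩
    · simpa using Odd.add_one odd
    · show phi ∪ A.names ∪ {Name.cn c0} = _
      rw [hphi', introSet_snoc, hint, Set.union_assoc, Set.union_assoc]
    · exact freshTr_snoc hfr (by rw [hint, ← hphi']; exact hdisj)
    · show c0 = c ∨ Name.cn c0 ∈ OIntro (t ++ [Act.oq f A c0])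
      right
      rw [OIntro_snoc_O hO, hint]
      exact Or.inr (Or.inr rfl)
    · show nset ((V.app A.toTm)) ⊆ _
      rw [goodS_snoc_O hO, hint]
      refine Set.union_subset ?_ ?_
      · exact (hgf f V hgfV).trans Set.subset_union_left
      · rw [nset_toTm]
        exact Set.subset_union_of_subset_right Set.subset_union_left _
    · intro ℓ W hW
      rw [goodS_snoc_O hO]
      exact (hheap ℓ W hW).trans Set.subset_union_left
    · intro g W hW
      rw [goodS_snoc_O hO]
      exact (hgf g W hW).trans Set.subset_union_left
    · intro d K₂ hK₂
      have hK₂' : gc d = some K₂ := hK₂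
      rw [goodS_snoc_O hO]
      refine ⟨(hgc d K₂ hK₂').1.trans Set.subset_union_left, ?_⟩
      exact Set.mem_union_left _ (Set.mem_union_left _ (hgc d K₂ hK₂').2)
    · intro d c₂ hne hxid
      have hxid' : Function.update xi c0 (some tc) d = some (some c₂) := hxid
      have hne' : gc d ≠ none := hne
      by_cases hd : d = c0
      · exfalso
        subst hd
        cases hgcd : gc d with
        | none => exact hne' hgcd
        | some K₂ =>
          have hmem : Name.cn d ∈ phi := (hgc d K₂ hgcd).2
          have : Name.cn d ∈ (A.names ∪ {Name.cn d}) ∩ phi := ⟨Or.inr rfl, hmem⟩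
          rw [hdisj] at this
          exact this
      · rw [Function.update_of_ne hd] at hxid'
        rcases hxi d c₂ hne' hxid' with h | h
        · exact Or.inl h
        · exact Or.inr (OIntro_mono_snoc h)
    · show FGood φ c (t ++ [Act.oq f A c0]) (extendF F (A.names ∪ {Name.cn c0}) av)
      exact FGood_snoc_O hO hF hav'

/-! ### Assembly -/

def Inv (φ : Set Name) (c : CName) (t : List Act) : Cfg → Prop
  | .act a => InvA φ c t a
  | .pas p => InvP φ c t p

lemma step_mono {b : Bool} {C C' : Cfg} {α : Option Act} (h : Step true b C α C') :
    Step false b C α C' := by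
  cases h with
  | tau hred => exact Step.tau hred
  | pa hV hdec hlin hdisj => exact Step.pa hV hdec hlin hdisj
  | pq hK hV hdec hlin hty hdisj hnotin => exact Step.pq hK hV hdec hlin hty hdisj hnotin
  | oa hty hlin hdisj hgcK hxiK hvis hbra =>
    exact Step.oa hty hlin hdisj hgcK hxiK (fun h => by simp at h) hbra
  | oq hty hlin hcod hdisj hnotin hgfV hvis =>
    exact Step.oq hty hlin hcod hdisj hnotin hgfV (fun h => by simp at h)

lemma steps_mono {b : Bool} {C D : Cfg} {tr : List Act} (h : Steps true b C tr D) :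
    Steps false b C tr D := by
  induction h with
  | nil => exact Steps.nil
  | tau h1 h2 ih => exact Steps.tau (step_mono h1) ih
  | cons h1 h2 ih => exact Steps.cons (step_mono h1) ih

lemma steps_fwd {φ : Set Name} {c : CName} (hφ : ∀ n ∈ φ, ∃ g, n = Name.fn g)
    {C : Cfg} {tr : List Act} {D : Cfg} (hsteps : Steps true false C tr D) :
    ∀ t₀, Inv φ c t₀ C →
    ∀ pre α rest, tr = pre ++ α :: rest → α.isP = false →
      ∃ S, VisO φ c (t₀ ++ pre) S ∧ α.subject ∈ S := by
  induction hsteps with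
  | nil =>
    intro t₀ _ pre α rest h _
    cases pre <;> simp at h
  | tau hstep hrest ih =>
    intro t₀ hInv pre α rest htr hα
    cases hstep with
    | tau hred => exact ih t₀ (invA_tau hred hInv hφ) pre α rest htr hα
  | @cons C C' C'' a tr hstep hrest ih =>
    intro t₀ hInv pre α rest htr hα
    cases C with
    | act acfg =>
      obtain ⟨p, rfl, hIp, hPa, -⟩ := step_P hstep hInv hφ
      cases pre with
      | nil =>
        injection htr with h1 h2
        subst h1
        rw [hPa] at hα
        simp at hα
      | cons b pre' =>
        injection htr with h1 h2
        subst h1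
        obtain ⟨S, hS, hsub⟩ := ih (t₀ ++ [a]) hIp pre' α rest h2 hα
        exact ⟨S, by simpa using hS, hsub⟩
    | pas pcfg =>
      have hIP : InvP φ c t₀ pcfg := hInv
      obtain ⟨⟨a', rfl, hIa, -⟩, hv, -⟩ := step_O hstep hIP hφ
      cases pre with
      | nil =>
        injection htr with h1 h2
        subst h1
        exact ⟨pcfg.avail, by simpa using hIP.hav, hv rfl⟩
      | cons b pre' =>
        injection htr with h1 h2
        subst h1
        obtain ⟨S, hS, hsub⟩ := ih (t₀ ++ [a]) hIa pre' α rest h2 hα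
        exact ⟨S, by simpa using hS, hsub⟩

lemma steps_bwd {φ : Set Name} {c : CName} (hφ : ∀ n ∈ φ, ∃ g, n = Name.fn g)
    {C : Cfg} {tr : List Act} {D : Cfg} (hsteps : Steps false false C tr D) :
    ∀ t₀, Inv φ c t₀ C →
    (∀ pre α rest, tr = pre ++ α :: rest → α.isP = false → Odd (t₀ ++ pre).length →
      ∃ S, VisO φ c (t₀ ++ pre) S ∧ α.subject ∈ S) →
    Steps true false C tr D := by
  induction hsteps with
  | nil => intro _ _ _; exact Steps.nil
  | tau hstep hrest ih =>
    intro t₀ hInv H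
    cases hstep with
    | tau hred => exact Steps.tau (Step.tau hred) (ih t₀ (invA_tau hred hInv hφ) H)
  | @cons C C' C'' a tr hstep hrest ih =>
    intro t₀ hInv H
    cases C with
    | act acfg =>
      obtain ⟨p, rfl, hIp, hPa, hstep'⟩ := step_P hstep hInv hφ
      refine Steps.cons hstep' (ih (t₀ ++ [a]) hIp ?_)
      intro pre α rest h hα hodd
      obtain ⟨S, hS, hsub⟩ := H (a :: pre) α rest (by rw [h]; rfl) hα
        (by simpa using hodd)
      exact ⟨S, by simpa using hS, hsub⟩
    | pas pcfg =>
      have hIP : InvP φ c t₀ pcfg := hInv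
      obtain ⟨⟨a', rfl, hIa, hOa⟩, -, hrec⟩ := step_O hstep hIP hφ
      obtain ⟨S, hS, hsub⟩ := H [] a tr rfl hOa (by simpa using hIP.odd)
      have hS' : VisO φ c t₀ S := by simpa using hS
      have heqS : S = pcfg.avail := visO_det hIP.hfr hS' hIP.hav
      refine Steps.cons (hrec (heqS ▸ hsub)) (ih (t₀ ++ [a]) hIa ?_)
      intro pre α rest h hα hodd
      obtain ⟨S', hS2, hsub2⟩ := H (a :: pre) α rest (by rw [h]; rfl) hα
        (by simpa using hodd)
      exact ⟨S', by simpa using hS2, hsub2⟩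

lemma OIntro_nil : OIntro ([] : List Act) = ∅ := by
  ext n
  constructor
  · rintro ⟨i, hi, _⟩
    simp at hi
  · rintro ⟨⟩

lemma inv_init {Γ : TyCtx} {τ : Ty} {M : Tm} (hM : CrFreeTm Γ M τ) (ρ : List AVal)
    (c : CName) :
    InvA (assignNames ρ) c []
      ⟨initTm M ρ, c, (fun _ => none), (fun _ => none), (fun _ => none),
       assignNames ρ ∪ {Name.cn c}, Heap.empty, emptyF⟩ := by
  have h0 : nset M = ∅ := nset_empty_of_crfree hM.noName hM.synt.2.1
  refine ⟨?_, ?_, ?_, ?_, ?_, ?_, ?_, ?_, ?_, ?_⟩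
  · simp
  · show assignNames ρ ∪ {Name.cn c} = _
    rw [introSet_nil, Set.union_empty]
  · exact freshTr_nil _ _
  · exact Or.inl rfl
  · show nset (initTm M ρ) ⊆ _
    refine (nset_msubst _ _).trans ?_
    rw [h0, Set.empty_union]
    rintro n ⟨V, hV, hn⟩
    rw [List.mem_map] at hV
    obtain ⟨A, hA, rfl⟩ := hV
    rw [nset_toTm] at hn
    exact Or.inl (Or.inl ⟨A, hA, hn⟩)
  · intro ℓ W hW
    have : Heap.empty ℓ = some W := hW
    simp [Heap.empty] at this
  · intro f W hW
    have : (none : Option Tm) = some W := hW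
    simp at this
  · intro d K hK
    have : (none : Option Tm) = some K := hK
    simp at this
  · intro d c₂ hne hxid
    have : (none : Option (Option CName)) = some (some c₂) := hxid
    simp at this
  · intro n
    refine Or.inl ⟨rfl, ?_⟩
    rw [OIntro_nil]
    rintro ⟨⟩

/-- the GOSC[HOSC] LTS generates exactly the O-visible traces of the
HOSC[HOSC] LTS: t ∈ Tr_GOSC(C_{M,vis}^{ρ,c}) iff t ∈ Tr_HOSC(C_M^{ρ,c}) and t is
O-visible, for cr-free HOSC terms. -/
theorem gosc_traces_are_ovisible_hosc_traces
    (Γ : TyCtx) (τ : Ty) (M : Tm) (hM : CrFreeTm Γ M τ)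
    (ρ : List AVal) (hρ : AssignTyped ρ Γ) (c : CName) (hc : c.ty = τ) (t : List Act) :
    t ∈ Traces true false (cfgInit M ρ c) ↔
      (t ∈ Traces false false (cfgInit M ρ c) ∧ OVisible (assignNames ρ) c t) := by
  have hφ := assignNames_fn ρ
  have hinit := inv_init hM ρ c
  constructor
  · rintro ⟨D, hsteps⟩
    refine ⟨⟨D, steps_mono hsteps⟩, ?_, ?_⟩
    · intro pre f A d hpre _
      obtain ⟨suf, hsuf⟩ := hpre
      have htr : t = pre ++ (Act.oq f A d) :: suf := by rw [← hsuf]; simp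
      obtain ⟨S, hS, hsub⟩ := steps_fwd hφ hsteps [] hinit pre _ suf htr rfl
      exact ⟨S, by simpa using hS, hsub⟩
    · intro pre d A hpre _
      obtain ⟨suf, hsuf⟩ := hpre
      have htr : t = pre ++ (Act.oa d A) :: suf := by rw [← hsuf]; simp
      obtain ⟨S, hS, hsub⟩ := steps_fwd hφ hsteps [] hinit pre _ suf htr rfl
      exact ⟨S, by simpa using hS, hsub⟩
  · rintro ⟨⟨D, hsteps⟩, hvis⟩
    refine ⟨D, steps_bwd hφ hsteps [] hinit ?_⟩
    intro pre α rest htr hα hodd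
    have hodd' : Even (pre.length + 1) := by
      refine Odd.add_one ?_
      simpa using hodd
    cases α with
    | oq f A d =>
      obtain ⟨S, hS, hf⟩ := hvis.1 pre f A d ⟨rest, by rw [htr]; simp⟩ hodd'
      exact ⟨S, by simpa using hS, hf⟩
    | oa d A =>
      obtain ⟨S, hS, hd⟩ := hvis.2 pre d A ⟨rest, by rw [htr]; simp⟩ hodd'
      exact ⟨S, by simpa using hS, hd⟩
    | pa d A => simp [Act.isP] at hα
    | pq f A d => simp [Act.isP] at hα


end OGS
end
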